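/- arXiv:2304.13326 — 4 statements merged into one kernel-verified Lean document; each statement's English description precedes it below -/
import Mathlib

section
/- The sequence N_ν(n) = L(1/Q_n)^{−1/ν} satisfies N_ν(n)·L((ν·n)^{1/ν}/N_ν(n))^{1/ν} → 1 as n → ∞. -/
open Filter Topology Asymptotics

lemma geomsum_le' {r : ℝ} (h0 : 0 ≤ r) (h1 : r < 1) (n : ℕ) :
    ∑ k ∈ Finset.range n, r ^ k ≤ (1 - r)⁻¹ :=
  le_trans (Summable.sum_le_tsum _ (fun i _ => pow_nonneg h0 i) (summable_geometric_of_lt_one h0 h1))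
    (le_of_eq (tsum_geometric_of_lt_one h0 h1))

lemma pow_rpow_comm' {ρ : ℝ} (h : 0 ≤ ρ) (ν : ℝ) (k : ℕ) : (ρ ^ k) ^ ν = (ρ ^ ν) ^ k := by
  rw [← Real.rpow_natCast ρ k, ← Real.rpow_mul h, mul_comm, Real.rpow_mul h, Real.rpow_natCast]

lemma mulpt_rpow {ρ x₀ ν : ℝ} (hρ : 0 ≤ ρ) (hx : 0 ≤ x₀) (k : ℕ) :
    (ρ ^ k * x₀) ^ ν = (ρ ^ ν) ^ k * x₀ ^ ν := by
  rw [Real.mul_rpow (pow_nonneg hρ k) hx, pow_rpow_comm' hρ]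

lemma ratio_rpow {ρ x ν : ℝ} (hρ : 0 < ρ) (hx : 0 < x) (n : ℕ) :
    (ρ ^ (n+1) * x) ^ ν / (ρ ^ n * x) ^ ν = ρ ^ ν := by
  have h1 : (0:ℝ) < (ρ ^ ν) ^ n := pow_pos (Real.rpow_pos_of_pos hρ ν) n
  have h2 : (0:ℝ) < x ^ ν := Real.rpow_pos_of_pos hx ν
  rw [mulpt_rpow hρ.le hx.le, mulpt_rpow hρ.le hx.le, pow_succ]
  field_simp

lemma exists_sandwich {ρ x₀ x : ℝ} (hρ : 1 < ρ) (hx₀ : 0 < x₀) (hx : x₀ ≤ x) :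
    ∃ n : ℕ, ρ ^ n * x₀ ≤ x ∧ x < ρ ^ (n+1) * x₀ := by
  have hex : ∃ n : ℕ, x < ρ ^ (n+1) * x₀ := by
    obtain ⟨n, hn⟩ := pow_unbounded_of_one_lt (x / x₀) hρ
    refine ⟨n, ?_⟩
    have h1 : x < ρ ^ n * x₀ := by
      rw [div_lt_iff₀ hx₀] at hn; linarith
    have h2 : ρ ^ n * x₀ ≤ ρ ^ (n+1) * x₀ := by
      apply mul_le_mul_of_nonneg_right _ hx₀.le
      exact pow_le_pow_right₀ hρ.le (Nat.le_succ n)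
    linarith
  classical
  refine ⟨Nat.find hex, ?_, Nat.find_spec hex⟩
  by_contra hcon
  push_neg at hcon
  have h0 : Nat.find hex ≠ 0 := by
    intro h
    rw [h] at hcon
    simp only [pow_zero, one_mul] at hcon
    linarith
  obtain ⟨m, hm⟩ := Nat.exists_eq_succ_of_ne_zero h0
  have hmin := Nat.find_min hex (m := m) (by omega)
  rw [hm] at hcon
  exact hmin hcon

set_option maxHeartbeats 3000000 in
lemma aux_limit (ν : ℝ) (hν0 : 0 < ν)
    (L : ℝ → ℝ) (hLpos : ∀ x : ℝ, 1 ≤ x → 0 < L x)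
    (hanti : ∀ x y : ℝ, 1 ≤ x → x ≤ y → L y / y ^ ν ≤ L x / x ^ ν)
    (hg0 : Tendsto (fun x => L x / x ^ ν) atTop (𝓝 0))
    (hR : ∀ ρ : ℝ, 1 < ρ → ∃ C : ℝ, 0 < C ∧ ∃ X : ℝ, 1 ≤ X ∧
      ∀ x, X ≤ x → |L (ρ * x) - L x| ≤ C * (L x / x ^ ν) * L x) :
    ∃ l : ℝ, 0 < l ∧ Tendsto L atTop (𝓝 l) := by
  have hxpos : ∀ x : ℝ, 1 ≤ x → (0:ℝ) < x := fun x hx => lt_of_lt_of_le one_pos hx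
  have hrppos : ∀ x : ℝ, 1 ≤ x → 0 < x ^ ν := fun x hx => Real.rpow_pos_of_pos (hxpos x hx) ν
  -- Step A : bounds on L
  obtain ⟨C, hC, X, hX1, hXb⟩ := hR 2 one_lt_two
  set s2 : ℝ := (2:ℝ) ^ ν with hs2def
  have hs2 : 1 < s2 := (Real.one_lt_rpow_iff_of_pos two_pos).mpr (Or.inl ⟨one_lt_two, hν0⟩)
  set r : ℝ := s2⁻¹ with hrdef
  have hr0 : 0 < r := inv_pos.mpr (lt_trans one_pos hs2)
  have hr1 : r < 1 := inv_lt_one_of_one_lt₀ hs2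
  set D : ℝ := 1 - r with hDdef
  have hD : 0 < D := by simp only [hDdef]; linarith
  have hDc : (0:ℝ) < D / (8 * C) := by positivity
  obtain ⟨x₀, hx₀g, hx₀m⟩ :=
    ((hg0.eventually_lt_const hDc).and (eventually_ge_atTop (max X 1))).exists
  have hx₀1 : 1 ≤ x₀ := le_trans (le_max_right _ _) hx₀m
  have hx₀X : X ≤ x₀ := le_trans (le_max_left _ _) hx₀m
  have hx₀0 : (0:ℝ) < x₀ := hxpos _ hx₀1
  set u : ℕ → ℝ := fun k => L (2 ^ k * x₀) with hudef
  have hpts1 : ∀ k : ℕ, x₀ ≤ 2 ^ k * x₀ := fun k =>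
    le_mul_of_one_le_left (le_of_lt hx₀0) (one_le_pow₀ (by norm_num))
  have hptsX : ∀ k : ℕ, X ≤ 2 ^ k * x₀ := fun k => le_trans hx₀X (hpts1 k)
  have hpts1' : ∀ k : ℕ, (1:ℝ) ≤ 2 ^ k * x₀ := fun k => le_trans hx₀1 (hpts1 k)
  have hu0 : u 0 = L x₀ := by simp [hudef]
  have hu0pos : 0 < u 0 := by rw [hu0]; exact hLpos _ hx₀1
  have hupos : ∀ k, 0 < u k := fun k => hLpos _ (hpts1' k)
  have hptrpow : ∀ k : ℕ, ((2:ℝ) ^ k * x₀) ^ ν = s2 ^ k * x₀ ^ ν := fun k =>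
    mulpt_rpow (by norm_num) (le_of_lt hx₀0) k
  have hLx₀pos : 0 < L x₀ := hLpos _ hx₀1
  -- key induction
  have key : ∀ n, ∀ k, k ≤ n → u 0 / 2 ≤ u k ∧ u k ≤ 2 * u 0 := by
    intro n
    induction n with
    | zero =>
      intro k hk
      interval_cases k
      constructor <;> linarith
    | succ n ih =>
      intro k hk
      rcases Nat.lt_succ_iff_lt_or_eq.mp (Nat.lt_succ_of_le hk) with h | h
      · exact ih k (Nat.lt_succ_iff.mp h)
      · subst h
        have hstep : ∀ j, j ≤ n → |u (j+1) - u j| ≤ D / 2 * u 0 * r ^ j := by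
          intro j hj
          obtain ⟨hbl, hbu⟩ := ih j hj
          have h1 := hXb (2 ^ j * x₀) (hptsX j)
          have h2 : (2:ℝ) * (2 ^ j * x₀) = 2 ^ (j+1) * x₀ := by ring
          rw [h2] at h1
          have hgj : L (2 ^ j * x₀) / ((2:ℝ) ^ j * x₀) ^ ν ≤ 2 * (L x₀ / x₀ ^ ν) * r ^ j := by
            rw [hptrpow j]
            have hden : (0:ℝ) < s2 ^ j * x₀ ^ ν := by positivity
            rw [div_le_iff₀ hden]
            have he : 2 * (L x₀ / x₀ ^ ν) * r ^ j * (s2 ^ j * x₀ ^ ν)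
                = 2 * L x₀ * ((r * s2) ^ j) := by
              have : (0:ℝ) < x₀ ^ ν := hrppos _ hx₀1
              field_simp [mul_pow]
              ring
            rw [he, hrdef, inv_mul_cancel₀ (ne_of_gt (lt_trans one_pos hs2)), one_pow, mul_one]
            calc L (2 ^ j * x₀) = u j := rfl
              _ ≤ 2 * u 0 := hbu
              _ = 2 * L x₀ := by rw [hu0]
          have hCg : C * (L (2 ^ j * x₀) / ((2:ℝ) ^ j * x₀) ^ ν)
              ≤ C * (2 * (L x₀ / x₀ ^ ν) * r ^ j) :=
            mul_le_mul_of_nonneg_left hgj (le_of_lt hC)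
          have hLb : L (2 ^ j * x₀) ≤ 2 * u 0 := hbu
          have hg0' : 0 ≤ L x₀ / x₀ ^ ν := le_of_lt (div_pos hLx₀pos (hrppos _ hx₀1))
          have hrj : (0:ℝ) ≤ r ^ j := pow_nonneg (le_of_lt hr0) j
          calc |u (j+1) - u j|
              ≤ C * (L (2 ^ j * x₀) / ((2:ℝ) ^ j * x₀) ^ ν) * L (2 ^ j * x₀) := h1
            _ ≤ C * (2 * (L x₀ / x₀ ^ ν) * r ^ j) * (2 * u 0) := by
                apply mul_le_mul hCg hLb (le_of_lt (hupos j))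
                positivity
            _ = (C * (L x₀ / x₀ ^ ν)) * (4 * u 0 * r ^ j) := by ring
            _ ≤ (D / (8 * C) * C) * (4 * u 0 * r ^ j) := by
                apply mul_le_mul_of_nonneg_right _ (by positivity)
                calc C * (L x₀ / x₀ ^ ν) ≤ C * (D / (8*C)) :=
                      mul_le_mul_of_nonneg_left (le_of_lt hx₀g) (le_of_lt hC)
                  _ = D / (8*C) * C := by ring
            _ = D / 2 * u 0 * r ^ j := by field_simp; ring
        have tele : u (n+1) - u 0 = ∑ j ∈ Finset.range (n+1), (u (j+1) - u j) :=
          (Finset.sum_range_sub u (n+1)).symm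
        have habs : |u (n+1) - u 0| ≤ u 0 / 2 := by
          rw [tele]
          calc |∑ j ∈ Finset.range (n+1), (u (j+1) - u j)|
              ≤ ∑ j ∈ Finset.range (n+1), |u (j+1) - u j| := Finset.abs_sum_le_sum_abs _ _
            _ ≤ ∑ j ∈ Finset.range (n+1), D / 2 * u 0 * r ^ j := by
                apply Finset.sum_le_sum
                intro j hj
                exact hstep j (Nat.lt_succ_iff.mp (Finset.mem_range.mp hj))
            _ = D / 2 * u 0 * ∑ j ∈ Finset.range (n+1), r ^ j := by
                rw [← Finset.mul_sum]
            _ ≤ D / 2 * u 0 * (1 - r)⁻¹ := by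
                apply mul_le_mul_of_nonneg_left (geomsum_le' (le_of_lt hr0) hr1 _) (by positivity)
            _ = u 0 / 2 := by
                rw [show (1:ℝ) - r = D from rfl]
                field_simp
        rw [abs_le] at habs
        constructor <;> linarith
  -- global bounds
  set m : ℝ := (u 0 / 2) / s2 with hmdef
  set M : ℝ := s2 * (2 * u 0) with hMdef
  have hs20 : (0:ℝ) < s2 := lt_trans one_pos hs2
  have hm0 : 0 < m := by positivity
  have hM0 : 0 < M := by positivity
  have hbound : ∀ x : ℝ, x₀ ≤ x → m ≤ L x ∧ L x ≤ M := by
    intro x hx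
    have hx1 : (1:ℝ) ≤ x := le_trans hx₀1 hx
    have hx0 : (0:ℝ) < x := hxpos _ hx1
    obtain ⟨n, h1, h2⟩ := exists_sandwich (one_lt_two (α := ℝ)) hx₀0 hx
    obtain ⟨hun1, hun2⟩ := key n n le_rfl
    obtain ⟨hun1', hun2'⟩ := key (n+1) (n+1) le_rfl
    have hxν : (0:ℝ) < x ^ ν := hrppos _ hx1
    have hLxeq : L x = L x / x ^ ν * x ^ ν := by field_simp
    constructor
    · -- lower bound
      have e1 := hanti x (2 ^ (n+1) * x₀) hx1 (le_of_lt h2)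
      have e2 : ((2:ℝ) ^ n * x₀) ^ ν ≤ x ^ ν :=
        Real.rpow_le_rpow (by positivity) h1 (le_of_lt hν0)
      have e3 : L (2 ^ (n+1) * x₀) / ((2:ℝ) ^ (n+1) * x₀) ^ ν * ((2:ℝ) ^ n * x₀) ^ ν
          ≤ L x / x ^ ν * x ^ ν := by
        apply mul_le_mul e1 e2 (by positivity)
        exact div_nonneg (le_of_lt (hLpos x hx1)) (le_of_lt hxν)
      have e5 : L (2 ^ (n+1) * x₀) / ((2:ℝ) ^ (n+1) * x₀) ^ ν * ((2:ℝ) ^ n * x₀) ^ ν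
          = u (n+1) / s2 := by
        rw [div_mul_eq_mul_div, mul_div_assoc]
        congr 1
        rw [show ((2:ℝ) ^ n * x₀) ^ ν / ((2:ℝ) ^ (n+1) * x₀) ^ ν
            = (((2:ℝ) ^ (n+1) * x₀) ^ ν / ((2:ℝ) ^ n * x₀) ^ ν)⁻¹ by
          rw [inv_div]]
        rw [ratio_rpow two_pos hx₀0 n]
      have e6 : m ≤ u (n+1) / s2 := by
        rw [hmdef]
        gcongr
      rw [hLxeq]
      calc m ≤ u (n+1) / s2 := e6
        _ ≤ L x / x ^ ν * x ^ ν := by rw [← e5]; exact e3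
    · -- upper bound
      have e1 := hanti (2 ^ n * x₀) x (hpts1' n) h1
      have e2 : x ^ ν ≤ ((2:ℝ) ^ (n+1) * x₀) ^ ν :=
        Real.rpow_le_rpow (le_of_lt hx0) (le_of_lt h2) (le_of_lt hν0)
      have e3 : L x / x ^ ν * x ^ ν
          ≤ L (2 ^ n * x₀) / ((2:ℝ) ^ n * x₀) ^ ν * ((2:ℝ) ^ (n+1) * x₀) ^ ν := by
        apply mul_le_mul e1 e2 (le_of_lt hxν)
        exact div_nonneg (le_of_lt (hupos n)) (by positivity)
      have e5 : L (2 ^ n * x₀) / ((2:ℝ) ^ n * x₀) ^ ν * ((2:ℝ) ^ (n+1) * x₀) ^ ν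
          = u n * s2 := by
        rw [div_mul_eq_mul_div, mul_div_assoc, ratio_rpow two_pos hx₀0 n]
      have e6 : u n * s2 ≤ M := by
        rw [hMdef]
        calc u n * s2 ≤ 2 * u 0 * s2 := by
              apply mul_le_mul_of_nonneg_right hun2 (le_of_lt hs20)
          _ = s2 * (2 * u 0) := by ring
      rw [hLxeq]
      calc L x / x ^ ν * x ^ ν ≤ u n * s2 := by rw [← e5]; exact e3
        _ ≤ M := e6
  clear_value s2 m M
  -- Step B : Cauchy property
  have claim : ∀ ε : ℝ, 0 < ε → ∃ Y : ℝ, x₀ ≤ Y ∧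
      ∀ x y : ℝ, Y ≤ x → x ≤ y → |L y - L x| ≤ ε := by
    intro ε hε
    obtain ⟨ε', hε'0, hε'1, hε'M⟩ :
        ∃ e : ℝ, 0 < e ∧ e ≤ 1 ∧ e * M ≤ ε / 2 := by
      refine ⟨min (ε / (2 * M)) 1, lt_min (by positivity) one_pos, min_le_right _ _, ?_⟩
      have h := min_le_left (ε / (2*M)) 1
      calc min (ε / (2 * M)) 1 * M ≤ ε/(2*M) * M := mul_le_mul_of_nonneg_right h (le_of_lt hM0)
        _ = ε/2 := by field_simp
    have h1ε' : (0:ℝ) < 1 + ε' := by linarith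
    obtain ⟨ρ, hρ1, hρν⟩ : ∃ ρ : ℝ, 1 < ρ ∧ ρ ^ ν = 1 + ε' := by
      refine ⟨(1 + ε') ^ ν⁻¹,
        (Real.one_lt_rpow_iff_of_pos h1ε').mpr (Or.inl ⟨by linarith, inv_pos.mpr hν0⟩), ?_⟩
      rw [← Real.rpow_mul (le_of_lt h1ε'), inv_mul_cancel₀ (ne_of_gt hν0), Real.rpow_one]
    have hρ0 : (0:ℝ) < ρ := lt_trans one_pos hρ1
    obtain ⟨C', hC', X', hX'1, hX'b⟩ := hR ρ hρ1
    have hrρ0 : (0:ℝ) < (ρ ^ ν)⁻¹ := by rw [hρν]; positivity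
    have hrρ1 : (ρ ^ ν)⁻¹ < 1 := by
      rw [hρν]; exact inv_lt_one_of_one_lt₀ (by linarith)
    obtain ⟨K, hK, hKdef⟩ : ∃ K : ℝ, 0 < K ∧ K = C' * M^2 / (1 - (ρ^ν)⁻¹) :=
      ⟨_, div_pos (by positivity) (by linarith), rfl⟩
    obtain ⟨T, hT0, hTν⟩ : ∃ T : ℝ, 0 < T ∧ T ^ ν = 4 * K / ε := by
      refine ⟨(4 * K / ε) ^ ν⁻¹, Real.rpow_pos_of_pos (by positivity) _, ?_⟩
      rw [← Real.rpow_mul (by positivity), inv_mul_cancel₀ (ne_of_gt hν0), Real.rpow_one]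
    refine ⟨max (max x₀ X') T, le_trans (le_max_left _ _) (le_max_left _ _), ?_⟩
    intro x y hYx hxy
    have hx₀x : x₀ ≤ x := le_trans (le_trans (le_max_left _ _) (le_max_left _ _)) hYx
    have hX'x : X' ≤ x := le_trans (le_trans (le_max_right _ _) (le_max_left _ _)) hYx
    have hTx : T ≤ x := le_trans (le_max_right _ _) hYx
    have hx1 : (1:ℝ) ≤ x := le_trans hx₀1 hx₀x
    have hx0 : (0:ℝ) < x := hxpos _ hx1
    have hxν : (0:ℝ) < x ^ ν := hrppos _ hx1
    have hKx : K / x ^ ν ≤ ε / 4 := by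
      have hxν4 : 4 * K / ε ≤ x ^ ν := by
        rw [← hTν]; exact Real.rpow_le_rpow (le_of_lt hT0) hTx (le_of_lt hν0)
      rw [div_le_iff₀ hxν]
      calc K = ε/4 * (4*K/ε) := by field_simp
        _ ≤ ε/4 * x ^ ν := mul_le_mul_of_nonneg_left hxν4 (by positivity)
    have hρpow1 : ∀ k : ℕ, (1:ℝ) ≤ ρ ^ k := fun k => one_le_pow₀ (le_of_lt hρ1)
    -- chain estimate
    have hchain : ∀ n : ℕ, |L (ρ ^ n * x) - L x| ≤ K / x ^ ν := by
      have main : ∀ n : ℕ, |L (ρ ^ n * x) - L x| ≤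
          C' * M^2 / x ^ ν * ∑ j ∈ Finset.range n, ((ρ^ν)⁻¹) ^ j := by
        intro n
        induction n with
        | zero => simp
        | succ n ihn =>
          have hpt : x ≤ ρ ^ n * x := le_mul_of_one_le_left (le_of_lt hx0) (hρpow1 n)
          have hpt1 : (1:ℝ) ≤ ρ ^ n * x := le_trans hx1 hpt
          have hstep := hX'b (ρ ^ n * x) (le_trans hX'x hpt)
          have heq : ρ * (ρ ^ n * x) = ρ ^ (n+1) * x := by ring
          rw [heq] at hstep
          have hLub : L (ρ ^ n * x) ≤ M := (hbound _ (le_trans hx₀x hpt)).2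
          have hLnn : 0 ≤ L (ρ ^ n * x) := le_of_lt (hLpos _ hpt1)
          have hgn : L (ρ ^ n * x) / (ρ ^ n * x) ^ ν ≤ M / x ^ ν * ((ρ^ν)⁻¹) ^ n := by
            have he : M / x ^ ν * ((ρ^ν)⁻¹) ^ n = M / ((ρ ^ ν) ^ n * x ^ ν) := by
              rw [inv_pow, ← div_eq_mul_inv, div_div, mul_comm (x ^ ν) _]
            rw [mulpt_rpow hρ0.le hx0.le, he]
            have hd : (0:ℝ) < (ρ ^ ν) ^ n * x ^ ν := by positivity
            exact (div_le_div_iff_of_pos_right hd).mpr hLub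
          have hstep2 : |L (ρ^(n+1)*x) - L (ρ^n*x)| ≤ C' * M^2 / x ^ ν * ((ρ^ν)⁻¹) ^ n := by
            calc |L (ρ^(n+1)*x) - L (ρ^n*x)|
                ≤ C' * (L (ρ^n*x) / (ρ^n*x) ^ ν) * L (ρ^n*x) := hstep
              _ ≤ C' * (M / x ^ ν * ((ρ^ν)⁻¹) ^ n) * M := by
                  apply mul_le_mul (mul_le_mul_of_nonneg_left hgn (le_of_lt hC')) hLub hLnn
                  positivity
              _ = C' * M^2 / x ^ ν * ((ρ^ν)⁻¹) ^ n := by ring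
          calc |L (ρ^(n+1)*x) - L x|
              ≤ |L (ρ^(n+1)*x) - L (ρ^n*x)| + |L (ρ^n*x) - L x| := abs_sub_le _ _ _
            _ ≤ C' * M^2 / x ^ ν * ((ρ^ν)⁻¹) ^ n
                + C' * M^2 / x ^ ν * ∑ j ∈ Finset.range n, ((ρ^ν)⁻¹) ^ j :=
                add_le_add hstep2 ihn
            _ = C' * M^2 / x ^ ν * ∑ j ∈ Finset.range (n+1), ((ρ^ν)⁻¹) ^ j := by
                rw [Finset.sum_range_succ]; ring
      intro n
      calc |L (ρ^n*x) - L x|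
          ≤ C' * M^2 / x ^ ν * ∑ j ∈ Finset.range n, ((ρ^ν)⁻¹) ^ j := main n
        _ ≤ C' * M^2 / x ^ ν * (1 - (ρ^ν)⁻¹)⁻¹ := by
            apply mul_le_mul_of_nonneg_left (geomsum_le' (le_of_lt hrρ0) hrρ1 n) (by positivity)
        _ = K / x ^ ν := by
            rw [hKdef, ← div_eq_mul_inv, div_div, div_div]
            ring
    -- sandwich
    obtain ⟨n, hn1, hn2⟩ := exists_sandwich hρ1 hx0 hxy
    have hptn1 : (1:ℝ) ≤ ρ ^ n * x := le_trans hx1 (le_mul_of_one_le_left (le_of_lt hx0) (hρpow1 n))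
    have hy1 : (1:ℝ) ≤ y := le_trans hx1 hxy
    have hyν : (0:ℝ) < y ^ ν := hrppos _ hy1
    have hup : L y ≤ (1 + ε') * L (ρ ^ n * x) := by
      have e1 := hanti (ρ ^ n * x) y hptn1 hn1
      have e2 : y ^ ν ≤ (ρ ^ (n+1) * x) ^ ν :=
        Real.rpow_le_rpow (by linarith) (le_of_lt hn2) (le_of_lt hν0)
      have e3 : L y / y ^ ν * y ^ ν ≤ L (ρ^n*x) / (ρ^n*x) ^ ν * (ρ^(n+1)*x) ^ ν := by
        apply mul_le_mul e1 e2 (le_of_lt hyν)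
        exact div_nonneg (le_of_lt (hLpos _ hptn1)) (by positivity)
      have e4 : L y / y ^ ν * y ^ ν = L y := by field_simp
      have e5 : L (ρ^n*x) / (ρ^n*x) ^ ν * (ρ^(n+1)*x) ^ ν = (1 + ε') * L (ρ^n*x) := by
        rw [div_mul_eq_mul_div, mul_div_assoc, ratio_rpow hρ0 hx0 n, hρν]
        ring
      rw [← e4, ← e5]
      exact e3
    have hlo : ((1 + ε'))⁻¹ * L (ρ ^ (n+1) * x) ≤ L y := by
      have e1 := hanti y (ρ ^ (n+1) * x) hy1 (le_of_lt hn2)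
      have e2 : (ρ ^ n * x) ^ ν ≤ y ^ ν :=
        Real.rpow_le_rpow (by positivity) hn1 (le_of_lt hν0)
      have e3 : L (ρ^(n+1)*x) / (ρ^(n+1)*x) ^ ν * (ρ^n*x) ^ ν ≤ L y / y ^ ν * y ^ ν := by
        apply mul_le_mul e1 e2 (by positivity)
        exact div_nonneg (le_of_lt (hLpos _ hy1)) (le_of_lt hyν)
      have e4 : L y / y ^ ν * y ^ ν = L y := by field_simp
      have e5 : L (ρ^(n+1)*x) / (ρ^(n+1)*x) ^ ν * (ρ^n*x) ^ ν
          = ((1+ε'))⁻¹ * L (ρ^(n+1)*x) := by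
        rw [div_mul_eq_mul_div, mul_div_assoc]
        rw [show (ρ^n*x) ^ ν / (ρ^(n+1)*x) ^ ν = ((ρ^(n+1)*x) ^ ν / (ρ^n*x) ^ ν)⁻¹ by
          rw [inv_div]]
        rw [ratio_rpow hρ0 hx0 n, hρν]
        ring
      rw [← e4, ← e5]
      exact e3
    -- combine
    have hc1 := hchain n
    have hc2 := hchain (n+1)
    have hLxM : L x ≤ M := (hbound x hx₀x).2
    have hLx0 : 0 < L x := hLpos x hx1
    have hKxnn : 0 ≤ K / x ^ ν := le_of_lt (div_pos hK hxν)
    rw [abs_le] at hc1 hc2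
    have hinv1 : 1 - ε' ≤ (1 + ε')⁻¹ := by
      rw [inv_eq_one_div, le_div_iff₀ h1ε']
      have h9 : (1 - ε') * (1 + ε') = 1 - ε' ^ 2 := by ring
      rw [h9]
      linarith [sq_nonneg ε']
    have hinv2 : (1 + ε')⁻¹ ≤ 1 := by
      rw [inv_eq_one_div, div_le_one h1ε']; linarith
    have hLn1M : L (ρ ^ (n+1) * x) ≥ L x - K / x ^ ν := by linarith [hc2.1]
    have hprod1 : (1 + ε') * L (ρ ^ n * x) ≤ (1 + ε') * (L x + K / x ^ ν) :=
      mul_le_mul_of_nonneg_left (by linarith [hc1.2]) (le_of_lt h1ε')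
    have hprod2 : ε' * L x ≤ ε' * M := mul_le_mul_of_nonneg_left hLxM (le_of_lt hε'0)
    have hprod3 : ε' * (K / x ^ ν) ≤ 1 * (K / x ^ ν) :=
      mul_le_mul_of_nonneg_right hε'1 hKxnn
    have hprod4 : (1 + ε')⁻¹ * (L x - K / x ^ ν) ≤ (1 + ε')⁻¹ * L (ρ ^ (n+1) * x) :=
      mul_le_mul_of_nonneg_left hLn1M (by positivity)
    have hprod5 : (1 - ε') * (L x - K / x ^ ν) ≤ (1 + ε')⁻¹ * (L x - K / x ^ ν) ∨
        (L x - K / x ^ ν) < 0 := by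
      rcases le_or_gt 0 (L x - K / x ^ ν) with h | h
      · exact Or.inl (mul_le_mul_of_nonneg_right hinv1 h)
      · exact Or.inr h
    rw [abs_le]
    constructor
    · -- -ε ≤ L y - L x
      rcases hprod5 with h5 | h5
      · linarith [hlo, hprod4, hprod2, hKx, h5, hε'M,
          mul_nonneg (le_of_lt hε'0) hKxnn]
      · linarith [hLpos y hy1, hKx, hprod2, h5]
    · -- L y - L x ≤ ε
      linarith [hup, hprod1, hprod2, hprod3, hKx, hε'M]
  -- construct the limit
  have hseq : CauchySeq (fun n : ℕ => L (x₀ + n)) := by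
    rw [Metric.cauchySeq_iff']
    intro ε hε
    obtain ⟨Y, hYx₀, hY⟩ := claim (ε/2) (half_pos hε)
    refine ⟨⌈Y⌉₊, fun n hn => ?_⟩
    have h1 : Y ≤ x₀ + (⌈Y⌉₊ : ℝ) := le_trans (Nat.le_ceil Y) (by linarith)
    have h2 : x₀ + (⌈Y⌉₊ : ℝ) ≤ x₀ + (n : ℝ) := by
      have : ((⌈Y⌉₊ : ℕ) : ℝ) ≤ (n : ℝ) := Nat.cast_le.mpr hn
      linarith
    have h3 := hY (x₀ + (⌈Y⌉₊ : ℝ)) (x₀ + (n : ℝ)) h1 h2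
    rw [Real.dist_eq]
    calc |L (x₀ + (n:ℝ)) - L (x₀ + (⌈Y⌉₊:ℝ))| ≤ ε/2 := h3
      _ < ε := by linarith
  obtain ⟨l, hl⟩ := cauchySeq_tendsto_of_complete hseq
  have hlm : m ≤ l := by
    apply ge_of_tendsto hl
    apply Eventually.of_forall
    intro n
    exact (hbound _ (le_add_of_nonneg_right (Nat.cast_nonneg n))).1
  refine ⟨l, lt_of_lt_of_le hm0 hlm, ?_⟩
  rw [Metric.tendsto_atTop]
  intro ε hε
  obtain ⟨Y, hYx₀, hY⟩ := claim (ε/3) (by linarith)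
  obtain ⟨Nn, hNn⟩ := Metric.tendsto_atTop.mp hl (ε/3) (by linarith)
  refine ⟨x₀ + (max Nn ⌈Y⌉₊ : ℕ), fun x hx => ?_⟩
  have hYNb : Y ≤ x₀ + ((max Nn ⌈Y⌉₊ : ℕ) : ℝ) := by
    have h1 : ((⌈Y⌉₊ : ℕ) : ℝ) ≤ ((max Nn ⌈Y⌉₊ : ℕ) : ℝ) := Nat.cast_le.mpr (le_max_right _ _)
    have := Nat.le_ceil Y
    linarith
  have h1 := hY (x₀ + ((max Nn ⌈Y⌉₊ : ℕ) : ℝ)) x hYNb hx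
  have h2 := hNn (max Nn ⌈Y⌉₊) (le_max_left _ _)
  have h3 : dist (L x) l ≤ dist (L x) (L (x₀ + ((max Nn ⌈Y⌉₊ : ℕ) : ℝ))) +
      dist (L (x₀ + ((max Nn ⌈Y⌉₊ : ℕ) : ℝ))) l := dist_triangle _ _ _
  rw [Real.dist_eq] at h3 ⊢
  rw [Real.dist_eq] at h2
  calc |L x - l| ≤ |L x - L (x₀ + ((max Nn ⌈Y⌉₊ : ℕ) : ℝ))| +
      |L (x₀ + ((max Nn ⌈Y⌉₊ : ℕ) : ℝ)) - l| := h3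
    _ < ε := by linarith


set_option maxHeartbeats 3000000 in
theorem stmt_7
    (p : ℕ → ℝ) (hp_nonneg : ∀ j, 0 ≤ p j) (hp0 : 0 < p 0)
    (hp_sum : ∑' j : ℕ, p j = 1) (hp_mean : ∑' j : ℕ, (j : ℝ) * p j = 1)
    (f : ℝ → ℝ) (hf : ∀ s : ℝ, f s = ∑' j : ℕ, p j * s ^ j)
    (ν : ℝ) (hν : ν ∈ Set.Ioo (0 : ℝ) 1)
    (L : ℝ → ℝ) (hLpos : ∀ x : ℝ, 0 < x → 0 < L x)
    (hSV : ∀ l : ℝ, 0 < l →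
      Filter.Tendsto (fun x => L (l * x) / L x) Filter.atTop (𝓝 1))
    (hfΛ : ∀ s ∈ Set.Ico (0 : ℝ) 1,
      f s - s = (1 - s) ^ (1 + ν) * L (1 / (1 - s)))
    (Λ : ℝ → ℝ) (hΛ : ∀ y ∈ Set.Ioc (0 : ℝ) 1, Λ y = y ^ ν * L (1 / y))
    (hRL : ∀ l : ℝ, 0 < l →
      (fun x => L (l * x) / L x - 1) =O[Filter.atTop] (fun x => L x / x ^ ν))
    (Q : ℕ → ℝ) (hQ : ∀ n, Q n = 1 - f^[n] 0)
    (N : ℕ → ℝ) (hN : ∀ n, N n = (L (1 / Q n)) ^ (-(1 / ν)))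
    :
    Filter.Tendsto
      (fun n : ℕ => N n * (L ((ν * (n : ℝ)) ^ (1 / ν) / N n)) ^ (1 / ν))
      Filter.atTop (𝓝 1) := by
  obtain ⟨hν0, hν1⟩ := hν
  -- summability
  have hpS : Summable p := by
    by_contra h
    rw [tsum_eq_zero_of_not_summable h] at hp_sum; norm_num at hp_sum
  have hjpS : Summable (fun j : ℕ => (j:ℝ) * p j) := by
    by_contra h
    rw [tsum_eq_zero_of_not_summable h] at hp_mean; norm_num at hp_mean
  have hjp_nonneg : ∀ j : ℕ, 0 ≤ (j:ℝ) * p j :=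
    fun j => mul_nonneg (Nat.cast_nonneg j) (hp_nonneg j)
  set k : ℝ → ℝ := fun s => ∑' j : ℕ, p j * ∑ i ∈ Finset.range j, s ^ i with hkdef
  have hterm_le : ∀ s : ℝ, 0 ≤ s → s ≤ 1 →
      ∀ j : ℕ, p j * ∑ i ∈ Finset.range j, s ^ i ≤ (j:ℝ) * p j := by
    intro s h0 h1 j
    have hsum : ∑ i ∈ Finset.range j, s ^ i ≤ (j:ℝ) := by
      calc ∑ i ∈ Finset.range j, s ^ i ≤ ∑ i ∈ Finset.range j, (1:ℝ) := by
            apply Finset.sum_le_sum; intro i _; exact pow_le_one₀ h0 h1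
        _ = (j:ℝ) := by simp
    calc p j * ∑ i ∈ Finset.range j, s ^ i ≤ p j * (j:ℝ) :=
          mul_le_mul_of_nonneg_left hsum (hp_nonneg j)
      _ = (j:ℝ) * p j := mul_comm _ _
  have hterm_nonneg : ∀ s : ℝ, 0 ≤ s → ∀ j : ℕ, 0 ≤ p j * ∑ i ∈ Finset.range j, s ^ i :=
    fun s h0 j => mul_nonneg (hp_nonneg j) (Finset.sum_nonneg fun i _ => pow_nonneg h0 i)
  have hkS : ∀ s : ℝ, 0 ≤ s → s ≤ 1 →
      Summable (fun j : ℕ => p j * ∑ i ∈ Finset.range j, s ^ i) := by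
    intro s h0 h1
    exact Summable.of_nonneg_of_le (hterm_nonneg s h0) (hterm_le s h0 h1) hjpS
  -- K1
  have hK1 : ∀ s ∈ Set.Ico (0:ℝ) 1, 1 - f s = (1 - s) * k s := by
    intro s hs
    obtain ⟨h0, h1⟩ := hs
    have hps : Summable (fun j : ℕ => p j * s ^ j) := by
      apply Summable.of_nonneg_of_le
        (fun j => mul_nonneg (hp_nonneg j) (pow_nonneg h0 j))
        (fun j => mul_le_of_le_one_right (hp_nonneg j) (pow_le_one₀ h0 h1.le)) hpS
    have e1 : ∑' j:ℕ, p j - ∑' j:ℕ, p j * s ^ j = ∑' j:ℕ, (p j - p j * s ^ j) :=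
      (Summable.tsum_sub hpS hps).symm
    have e0 : 1 - f s = ∑' j:ℕ, (p j - p j * s ^ j) := by
      conv_lhs => rw [hf s, ← hp_sum]
      exact e1
    rw [e0]
    have e2 : ∀ j:ℕ, p j - p j * s ^ j = (1 - s) * (p j * ∑ i ∈ Finset.range j, s ^ i) := by
      intro j
      linear_combination (p j) * geom_sum_mul s j
    rw [tsum_congr e2, tsum_mul_left]
  -- K2
  have hK2 : ∀ s t : ℝ, 0 ≤ s → s ≤ t → t ≤ 1 → k s ≤ k t := by
    intro s t h0 hst h1
    apply Summable.tsum_le_tsum _ (hkS s h0 (le_trans hst h1)) (hkS t (le_trans h0 hst) h1)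
    intro j
    apply mul_le_mul_of_nonneg_left _ (hp_nonneg j)
    apply Finset.sum_le_sum
    intro i _
    exact pow_le_pow_left₀ h0 hst i
  -- K3
  have hK3 : ∀ s : ℝ, 0 ≤ s → s ≤ 1 → k s ≤ 1 := by
    intro s h0 h1
    rw [← hp_mean]
    exact Summable.tsum_le_tsum (hterm_le s h0 h1) (hkS s h0 h1) hjpS
  -- K4
  have hK4 : ∀ ε : ℝ, 0 < ε → ∃ s : ℝ, 0 ≤ s ∧ s < 1 ∧ 1 - ε ≤ k s := by
    intro ε hε
    rcases lt_or_ge ε 2 with hε2 | hε2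
    · have hhs := hjpS.hasSum
      rw [hp_mean] at hhs
      have hev : ∀ᶠ F : Finset ℕ in atTop, 1 - ε/2 < ∑ j ∈ F, (j:ℝ) * p j :=
        hhs.eventually (eventually_gt_nhds (by linarith))
      obtain ⟨F, hF⟩ := hev.exists
      set J : ℕ := F.sup id with hJ
      have hJle : ∀ j ∈ F, j ≤ J := fun j hj => Finset.le_sup (f := id) hj
      set s : ℝ := 1 - (ε/2) / (J+1) with hs
      have hJ1 : (0:ℝ) < (J:ℝ) + 1 := by positivity
      have hδ : 0 < (ε/2) / ((J:ℝ)+1) := by positivity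
      have hδ1 : (ε/2) / ((J:ℝ)+1) ≤ 1 := by
        rw [div_le_one hJ1]
        have : (0:ℝ) ≤ (J:ℝ) := Nat.cast_nonneg J
        linarith
      have hs0 : 0 ≤ s := by rw [hs]; linarith
      have hs1 : s < 1 := by rw [hs]; linarith
      have hsJ : 1 - ε/2 ≤ s ^ J := by
        have hb := one_add_mul_le_pow (a := s - 1) (by rw [hs]; linarith) J
        have : 1 + (J:ℝ) * (s - 1) = 1 - (J:ℝ) * ((ε/2)/((J:ℝ)+1)) := by rw [hs]; ring
        rw [this] at hb
        have hJfrac : (J:ℝ) * ((ε/2)/((J:ℝ)+1)) ≤ ε/2 := by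
          have heq : (J:ℝ) * ((ε/2)/((J:ℝ)+1)) = (ε/2) * ((J:ℝ)/((J:ℝ)+1)) := by ring
          rw [heq]
          have h9 : (J:ℝ)/((J:ℝ)+1) ≤ 1 := by
            rw [div_le_one hJ1]; linarith
          nlinarith [hε]
        calc 1 - ε/2 ≤ 1 - (J:ℝ) * ((ε/2)/((J:ℝ)+1)) := by linarith
          _ ≤ (1 + (s-1)) ^ J := hb
          _ = s ^ J := by norm_num
      have hlow : ∀ j ∈ F, (j:ℝ) * p j * s ^ J ≤ p j * ∑ i ∈ Finset.range j, s ^ i := by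
        intro j hj
        have h1 : ∀ i ∈ Finset.range j, s ^ J ≤ s ^ i := by
          intro i hi
          apply pow_le_pow_of_le_one hs0 hs1.le
          have h8 := Finset.mem_range.mp hi
          have h9 := hJle j hj
          omega
        have h2 : (j:ℝ) * s ^ J ≤ ∑ i ∈ Finset.range j, s ^ i := by
          have := Finset.card_nsmul_le_sum (Finset.range j) (fun i => s ^ i) (s ^ J)
            (fun i hi => h1 i hi)
          simpa [mul_comm] using this
        calc (j:ℝ) * p j * s ^ J = p j * ((j:ℝ) * s ^ J) := by ring
          _ ≤ p j * ∑ i ∈ Finset.range j, s ^ i :=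
            mul_le_mul_of_nonneg_left h2 (hp_nonneg j)
      refine ⟨s, hs0, hs1, ?_⟩
      have hsJ0 : 0 ≤ s ^ J := pow_nonneg hs0 J
      have hchain : (1 - ε/2) * s ^ J ≤ k s := by
        calc (1 - ε/2) * s ^ J ≤ (∑ j ∈ F, (j:ℝ) * p j) * s ^ J :=
              mul_le_mul_of_nonneg_right (le_of_lt hF) hsJ0
          _ = ∑ j ∈ F, (j:ℝ) * p j * s ^ J := by rw [Finset.sum_mul]
          _ ≤ ∑ j ∈ F, p j * ∑ i ∈ Finset.range j, s ^ i := Finset.sum_le_sum hlow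
          _ ≤ k s := by
              apply Summable.sum_le_tsum F (fun j _ => hterm_nonneg s hs0 j) (hkS s hs0 hs1.le)
      nlinarith [hsJ]
    · refine ⟨0, le_refl (0:ℝ), one_pos, ?_⟩
      have h9 : 0 ≤ k 0 := tsum_nonneg (hterm_nonneg (0:ℝ) le_rfl)
      linarith
  -- bridge
  have hbridge : ∀ x : ℝ, 1 ≤ x → L x = x ^ ν * (1 - k (1 - 1/x)) := by
    intro x hx
    have hx0 : (0:ℝ) < x := lt_of_lt_of_le one_pos hx
    have hinv1 : 1/x ≤ 1 := by rw [div_le_one hx0]; exact hx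
    have hinv0 : 0 < 1/x := by positivity
    have hs0 : 0 ≤ 1 - 1/x := by linarith
    have hs1 : 1 - 1/x < 1 := by linarith
    have h1 := hfΛ (1 - 1/x) ⟨hs0, hs1⟩
    have h2 : (1:ℝ) - (1 - 1/x) = 1/x := by ring
    rw [h2] at h1
    have h3 : 1/(1/x:ℝ) = x := by field_simp
    rw [h3] at h1
    have h4 := hK1 (1-1/x) ⟨hs0, hs1⟩
    rw [h2] at h4
    have h5 : (1/x:ℝ) ^ (1+ν) * L x = 1/x * (1 - k (1-1/x)) := by
      rw [← h1]
      linarith [h4]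
    have hxν : (0:ℝ) < x ^ ν := Real.rpow_pos_of_pos hx0 ν
    rw [one_div, Real.inv_rpow hx0.le, Real.rpow_add hx0, Real.rpow_one] at h5
    have h6 : L x = (x * x ^ ν) * ((x * x ^ ν)⁻¹ * L x) := by
      field_simp
    rw [h5] at h6
    rw [h6]
    field_simp
  -- positivity of k
  have hjex : ∃ j : ℕ, 0 < (j:ℝ) * p j := by
    by_contra h
    push_neg at h
    have hz : ∀ j : ℕ, (j:ℝ) * p j = 0 := fun j => le_antisymm (h j) (hjp_nonneg j)
    rw [tsum_congr hz, tsum_zero] at hp_mean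
    norm_num at hp_mean
  have hkpos : ∀ s : ℝ, 0 ≤ s → s < 1 → 0 < k s := by
    intro s h0 h1
    obtain ⟨j₀, hj₀⟩ := hjex
    have hj₀p : 0 < p j₀ := by
      rcases lt_or_ge 0 (p j₀) with h | h
      · exact h
      · exfalso
        have : (j₀:ℝ) * p j₀ ≤ 0 := mul_nonpos_of_nonneg_of_nonpos (Nat.cast_nonneg j₀) h
        linarith
    have hj₀1 : 1 ≤ j₀ := by
      by_contra h
      push_neg at h
      interval_cases j₀
      simp at hj₀
    have hterm : 0 < p j₀ * ∑ i ∈ Finset.range j₀, s ^ i := by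
      apply mul_pos hj₀p
      apply Finset.sum_pos' (fun i _ => pow_nonneg h0 i)
      exact ⟨0, Finset.mem_range.mpr hj₀1, by norm_num⟩
    calc (0:ℝ) < p j₀ * ∑ i ∈ Finset.range j₀, s ^ i := hterm
      _ ≤ k s := Summable.le_tsum (hkS s h0 h1.le) j₀ (fun j _ => hterm_nonneg s h0 j)
  -- k < 1
  have hkl1 : ∀ s : ℝ, 0 ≤ s → s < 1 → k s < 1 := by
    intro s h0 h1
    have h1s : (0:ℝ) < 1 - s := by linarith
    have hx1 : (1:ℝ) ≤ 1/(1-s) := by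
      rw [le_div_iff₀ h1s]; linarith
    have hb := hbridge (1/(1-s)) hx1
    have hL := hLpos (1/(1-s)) (by positivity)
    have hxν : (0:ℝ) < (1/(1-s)) ^ ν := Real.rpow_pos_of_pos (by positivity) ν
    have heq : 1 - 1/(1/(1-s):ℝ) = s := by field_simp; ring
    rw [heq] at hb
    rw [hb] at hL
    rcases mul_pos_iff.mp hL with ⟨_, h2⟩ | ⟨h2, _⟩
    · linarith
    · linarith
  -- antitone of g
  have hanti : ∀ x y : ℝ, 1 ≤ x → x ≤ y → L y / y ^ ν ≤ L x / x ^ ν := by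
    intro x y hx hxy
    have hy1 : (1:ℝ) ≤ y := le_trans hx hxy
    have hx0 : (0:ℝ) < x := lt_of_lt_of_le one_pos hx
    have hy0 : (0:ℝ) < y := lt_of_lt_of_le one_pos hy1
    have hxν : (0:ℝ) < x ^ ν := Real.rpow_pos_of_pos hx0 ν
    have hyν : (0:ℝ) < y ^ ν := Real.rpow_pos_of_pos hy0 ν
    have hgx : L x / x ^ ν = 1 - k (1 - 1/x) := by
      rw [hbridge x hx, mul_comm, mul_div_assoc, div_self (ne_of_gt hxν), mul_one]
    have hgy : L y / y ^ ν = 1 - k (1 - 1/y) := by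
      rw [hbridge y hy1, mul_comm, mul_div_assoc, div_self (ne_of_gt hyν), mul_one]
    rw [hgx, hgy]
    have hmono : k (1 - 1/x) ≤ k (1 - 1/y) := by
      apply hK2
      · have : 1/x ≤ 1 := by rw [div_le_one hx0]; exact hx
        linarith
      · have : 1/y ≤ 1/x := one_div_le_one_div_of_le hx0 hxy
        linarith
      · have : 0 < 1/y := by positivity
        linarith
    linarith
  -- g tends to 0
  have hg0 : Tendsto (fun x => L x / x ^ ν) atTop (𝓝 0) := by
    rw [Metric.tendsto_atTop]
    intro ε hε
    obtain ⟨s₀, hs₀0, hs₀1, hs₀k⟩ := hK4 (ε/2) (by linarith)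
    have h1s₀ : (0:ℝ) < 1 - s₀ := by linarith
    refine ⟨max 1 (1/(1-s₀)), fun x hx => ?_⟩
    have hx1 : (1:ℝ) ≤ x := le_trans (le_max_left _ _) hx
    have hx0 : (0:ℝ) < x := lt_of_lt_of_le one_pos hx1
    have hxs : 1/(1-s₀) ≤ x := le_trans (le_max_right _ _) hx
    have h2 : 1/x ≤ 1 - s₀ := by
      rw [div_le_iff₀ hx0]
      rw [div_le_iff₀ h1s₀] at hxs
      linarith
    have h2' : 0 < 1/x := by positivity
    have h3 : s₀ ≤ 1 - 1/x := by linarith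
    have h4 : k s₀ ≤ k (1 - 1/x) := hK2 s₀ (1 - 1/x) hs₀0 h3 (by linarith)
    have h5 : k (1 - 1/x) ≤ 1 := hK3 (1 - 1/x) (by linarith) (by linarith)
    have hxν : (0:ℝ) < x ^ ν := Real.rpow_pos_of_pos hx0 ν
    rw [Real.dist_eq, sub_zero]
    rw [hbridge x hx1, mul_comm, mul_div_assoc, div_self (ne_of_gt hxν), mul_one]
    rw [abs_of_nonneg (by linarith : (0:ℝ) ≤ 1 - k (1 - 1/x))]
    linarith
  -- big-O hypothesis in the aux form
  have hR : ∀ ρ : ℝ, 1 < ρ → ∃ C : ℝ, 0 < C ∧ ∃ X : ℝ, 1 ≤ X ∧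
      ∀ x, X ≤ x → |L (ρ * x) - L x| ≤ C * (L x / x ^ ν) * L x := by
    intro ρ hρ
    obtain ⟨C, hC⟩ := (hRL ρ (by linarith)).isBigOWith
    rw [Asymptotics.isBigOWith_iff] at hC
    obtain ⟨X, hX⟩ := eventually_atTop.mp (hC.and (eventually_ge_atTop (1:ℝ)))
    refine ⟨max C 1, lt_max_of_lt_right one_pos, max X 1, le_max_right _ _, fun x hx => ?_⟩
    obtain ⟨h1, h2⟩ := hX x (le_trans (le_max_left _ _) hx)
    have hx1 : (1:ℝ) ≤ x := le_trans (le_max_right _ _) hx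
    have hx0 : (0:ℝ) < x := lt_of_lt_of_le one_pos hx1
    have hLx : 0 < L x := hLpos x hx0
    have hxν : (0:ℝ) < x ^ ν := Real.rpow_pos_of_pos hx0 ν
    have hgx : 0 < L x / x ^ ν := div_pos hLx hxν
    rw [Real.norm_eq_abs, Real.norm_eq_abs] at h1
    have heq : |L (ρ*x) - L x| = |L (ρ*x)/L x - 1| * L x := by
      have e : L (ρ*x)/L x - 1 = (L (ρ*x) - L x) / L x := by field_simp
      rw [e, abs_div, abs_of_pos hLx, div_mul_cancel₀ _ (ne_of_gt hLx)]
    rw [heq]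
    calc |L (ρ*x)/L x - 1| * L x ≤ (C * |L x / x ^ ν|) * L x :=
          mul_le_mul_of_nonneg_right h1 hLx.le
      _ = C * (L x / x ^ ν) * L x := by rw [abs_of_pos hgx]
      _ ≤ max C 1 * (L x / x ^ ν) * L x := by
          apply mul_le_mul_of_nonneg_right _ hLx.le
          exact mul_le_mul_of_nonneg_right (le_max_left C 1) hgx.le
  -- the limit of L
  obtain ⟨l, hl0, hlim⟩ := aux_limit ν hν0 L
    (fun x hx => hLpos x (lt_of_lt_of_le one_pos hx)) hanti hg0 hR
  -- iterates stay in [0,1)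
  have hs_mem : ∀ n : ℕ, f^[n] 0 ∈ Set.Ico (0:ℝ) 1 := by
    intro n
    induction n with
    | zero => simpa using ⟨le_refl (0:ℝ), one_pos⟩
    | succ n ih =>
      rw [Function.iterate_succ_apply']
      have h0 := ih.1
      have h1 := ih.2
      have hfs := hfΛ _ ih
      have hLp := hLpos (1/(1 - f^[n] 0)) (one_div_pos.mpr (by linarith))
      have hpν : (0:ℝ) < (1 - f^[n] 0) ^ (1+ν) :=
        Real.rpow_pos_of_pos (by linarith) _
      have h4 := hK1 _ ih
      have hks : 0 < k (f^[n] 0) := hkpos _ h0 h1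
      constructor
      · linarith [mul_pos hpν hLp, hfs]
      · linarith [mul_pos (show (0:ℝ) < 1 - f^[n] 0 by linarith) hks, h4]
  have hQmem : ∀ n, 0 < Q n ∧ Q n ≤ 1 := by
    intro n
    rw [hQ n]
    obtain ⟨h0, h1⟩ := hs_mem n
    constructor <;> linarith
  have hQrec : ∀ n, Q (n+1) = Q n * k (1 - Q n) := by
    intro n
    rw [hQ (n+1), hQ n, Function.iterate_succ_apply', hK1 _ (hs_mem n)]
    have : (1:ℝ) - (1 - f^[n] 0) = f^[n] 0 := by ring
    rw [this]
  have hQanti : ∀ n, Q (n+1) ≤ Q n := by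
    intro n
    rw [hQrec n]
    have h1 := hK3 (1 - Q n) (by linarith [(hQmem n).2]) (by linarith [(hQmem n).1])
    calc Q n * k (1 - Q n) ≤ Q n * 1 := mul_le_mul_of_nonneg_left h1 (hQmem n).1.le
      _ = Q n := mul_one _
  have hQtend : Tendsto Q atTop (𝓝 0) := by
    have hmono : Antitone Q := antitone_nat_of_succ_le hQanti
    have hbdd : BddBelow (Set.range Q) := by
      refine ⟨0, ?_⟩
      rintro y ⟨n, rfl⟩
      exact (hQmem n).1.le
    have htends := tendsto_atTop_ciInf hmono hbdd
    have hq0 : 0 ≤ ⨅ n, Q n := le_ciInf fun n => (hQmem n).1.le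
    rcases eq_or_lt_of_le hq0 with h | h
    · rwa [← h] at htends
    · exfalso
      set q := ⨅ n, Q n with hqdef
      have hqle : ∀ n, q ≤ Q n := fun n => ciInf_le hbdd n
      have hq1 : q ≤ 1 := le_trans (hqle 0) (hQmem 0).2
      have hθ : k (1 - q) < 1 := hkl1 (1-q) (by linarith) (by linarith)
      have hθ0 : 0 ≤ k (1 - q) := (hkpos (1-q) (by linarith) (by linarith)).le
      have hind : ∀ n, Q n ≤ k (1-q) ^ n * Q 0 := by
        intro n
        induction n with
        | zero => simp
        | succ n ih =>
          rw [hQrec n, pow_succ]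
          have hk2 : k (1 - Q n) ≤ k (1 - q) := by
            apply hK2
            · linarith [(hQmem n).2]
            · linarith [hqle n]
            · linarith
          calc Q n * k (1 - Q n) ≤ (k (1-q) ^ n * Q 0) * k (1-q) := by
                apply mul_le_mul ih hk2
                  (hkpos (1 - Q n) (by linarith [(hQmem n).2]) (by linarith [(hQmem n).1])).le
                  (mul_nonneg (pow_nonneg hθ0 n) (hQmem 0).1.le)
            _ = k (1-q) ^ n * k (1-q) * Q 0 := by ring
      have hpow := tendsto_pow_atTop_nhds_zero_of_lt_one hθ0 hθ
      have hmul : Tendsto (fun n => k (1-q) ^ n * Q 0) atTop (𝓝 0) := by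
        simpa using hpow.mul_const (Q 0)
      obtain ⟨n, hn⟩ := (hmul.eventually_lt_const h).exists
      linarith [hind n, hqle n]
  -- assembly
  have hQinvtend : Tendsto (fun n => 1 / Q n) atTop atTop := by
    have h1 : Tendsto Q atTop (𝓝[>] 0) :=
      tendsto_nhdsWithin_of_tendsto_nhds_of_eventually_within _ hQtend
        (Eventually.of_forall fun n => (hQmem n).1)
    have := h1.inv_tendsto_nhdsGT_zero
    simpa [one_div, Pi.inv_def] using this
  have hLQ : Tendsto (fun n => L (1 / Q n)) atTop (𝓝 l) := hlim.comp hQinvtend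
  have hNl : Tendsto N atTop (𝓝 (l ^ (-(1/ν)))) := by
    have hcont : ContinuousAt (fun y : ℝ => y ^ (-(1/ν))) l :=
      Real.continuousAt_rpow_const l _ (Or.inl (ne_of_gt hl0))
    have h2 := hcont.tendsto.comp hLQ
    have h3 : Tendsto (fun n : ℕ => (L (1/Q n)) ^ (-(1/ν))) atTop (𝓝 (l ^ (-(1/ν)))) := h2
    exact Tendsto.congr (fun n => (hN n).symm) h3
  have hNpos : (0:ℝ) < l ^ (-(1/ν)) := Real.rpow_pos_of_pos hl0 _
  have hxtend : Tendsto (fun n : ℕ => (ν * (n:ℝ)) ^ (1/ν) / N n) atTop atTop := by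
    have h1 : Tendsto (fun n : ℕ => (ν * (n:ℝ)) ^ (1/ν)) atTop atTop := by
      apply (tendsto_rpow_atTop (by positivity : (0:ℝ) < 1/ν)).comp
      exact (tendsto_natCast_atTop_atTop (R := ℝ)).const_mul_atTop hν0
    have h2 : Tendsto (fun n : ℕ => (N n)⁻¹) atTop (𝓝 ((l ^ (-(1/ν)))⁻¹)) :=
      hNl.inv₀ (ne_of_gt hNpos)
    have h3 := Filter.Tendsto.pos_mul_atTop (inv_pos.mpr hNpos) h2 h1
    simpa [div_eq_mul_inv, mul_comm] using h3
  have hLx : Tendsto (fun n : ℕ => L ((ν * (n:ℝ)) ^ (1/ν) / N n)) atTop (𝓝 l) :=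
    hlim.comp hxtend
  have hcont2 : ContinuousAt (fun y : ℝ => y ^ (1/ν)) l :=
    Real.continuousAt_rpow_const l _ (Or.inl (ne_of_gt hl0))
  have hLxp : Tendsto (fun n : ℕ => (L ((ν * (n:ℝ)) ^ (1/ν) / N n)) ^ (1/ν))
      atTop (𝓝 (l ^ (1/ν))) := hcont2.tendsto.comp hLx
  have hfin := hNl.mul hLxp
  have hone : l ^ (-(1/ν)) * l ^ (1/ν) = 1 := by
    rw [← Real.rpow_add hl0]
    norm_num
  rw [hone] at hfin
  exact hfin
end

section
/- Under condition [R_L], the limit C_L := lim_{x→∞} L(x) exists, is finite and positive, and the sequence N_ν(n) = L(1/Q_n)^{−1/ν} satisfies N_ν(n) = C_L^{−1/ν} + O(n^{−ν}) as n → ∞. -/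
open Filter Topology Asymptotics

lemma aux_summable {g : ℕ → ℝ} (h : ∑' j, g j = 1) : Summable g := by
  by_contra hs
  rw [tsum_eq_zero_of_not_summable hs] at h
  norm_num at h

lemma aux_summable_pow {p : ℕ → ℝ} (hp_nonneg : ∀ j, 0 ≤ p j) (hp : Summable p)
    {s : ℝ} (h0 : 0 ≤ s) (h1 : s ≤ 1) : Summable (fun j => p j * s ^ j) := by
  apply Summable.of_nonneg_of_le (fun j => mul_nonneg (hp_nonneg j) (pow_nonneg h0 j)) (fun j => ?_) hp
  calc p j * s ^ j ≤ p j * 1 := by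
        apply mul_le_mul_of_nonneg_left _ (hp_nonneg j)
        exact pow_le_one₀ h0 h1
    _ = p j := mul_one _

-- pointwise: t^j - s^j ≤ j (t - s) for 0 ≤ s ≤ t ≤ 1
lemma aux_pow_sub_le {s t : ℝ} (h0 : 0 ≤ s) (hst : s ≤ t) (h1 : t ≤ 1) (j : ℕ) :
    t ^ j - s ^ j ≤ (j : ℝ) * (t - s) := by
  rw [← geom_sum₂_mul t s j]
  apply mul_le_mul_of_nonneg_right _ (by linarith)
  calc (∑ i ∈ Finset.range j, t ^ i * s ^ (j - 1 - i)) ≤ ∑ i ∈ Finset.range j, 1 := by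
        apply Finset.sum_le_sum
        intro i _
        have ht : t ^ i ≤ 1 := pow_le_one₀ (le_trans h0 hst) h1
        have hs : s ^ (j-1-i) ≤ 1 := pow_le_one₀ h0 (le_trans hst h1)
        calc t ^ i * s ^ (j-1-i) ≤ 1 * 1 := by
              apply mul_le_mul ht hs (by positivity) (by norm_num)
          _ = 1 := by norm_num
    _ = (j : ℝ) := by simp

lemma aux_lipf {p : ℕ → ℝ} (hp_nonneg : ∀ j, 0 ≤ p j) (hp : Summable p)
    (hjp : Summable (fun j : ℕ => (j:ℝ) * p j)) (hmean : ∑' j : ℕ, (j:ℝ) * p j = 1)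
    {f : ℝ → ℝ} (hf : ∀ s : ℝ, f s = ∑' j : ℕ, p j * s ^ j)
    {s t : ℝ} (h0 : 0 ≤ s) (hst : s ≤ t) (h1 : t ≤ 1) : f t - f s ≤ t - s := by
  have hsum_s := aux_summable_pow hp_nonneg hp h0 (le_trans hst h1)
  have hsum_t := aux_summable_pow hp_nonneg hp (le_trans h0 hst) h1
  rw [hf, hf, ← Summable.tsum_sub hsum_t hsum_s]
  calc ∑' j, (p j * t ^ j - p j * s ^ j)
      ≤ ∑' j : ℕ, (j : ℝ) * p j * (t - s) := by
        apply Summable.tsum_le_tsum _ (hsum_t.sub hsum_s) (hjp.mul_right _)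
        intro j
        rw [← mul_sub]
        calc p j * (t ^ j - s ^ j) ≤ p j * ((j:ℝ) * (t - s)) :=
              mul_le_mul_of_nonneg_left (aux_pow_sub_le h0 hst h1 j) (hp_nonneg j)
          _ = (j:ℝ) * p j * (t - s) := by ring
    _ = t - s := by rw [tsum_mul_right, hmean, one_mul]


section
variable {p : ℕ → ℝ} (hp_nonneg : ∀ j, 0 ≤ p j) (hp : Summable p)
  (hp_sum : ∑' j : ℕ, p j = 1)
  (hjp : Summable (fun j : ℕ => (j:ℝ) * p j)) (hmean : ∑' j : ℕ, (j:ℝ) * p j = 1)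
  {f : ℝ → ℝ} (hf : ∀ s : ℝ, f s = ∑' j : ℕ, p j * s ^ j)

include hp_nonneg hp in
lemma aux_summable_pow' {s : ℝ} (h0 : 0 ≤ s) (h1 : s ≤ 1) : Summable (fun j => p j * s ^ j) := by
  apply Summable.of_nonneg_of_le (fun j => mul_nonneg (hp_nonneg j) (pow_nonneg h0 j)) (fun j => ?_) hp
  calc p j * s ^ j ≤ p j * 1 :=
        mul_le_mul_of_nonneg_left (pow_le_one₀ h0 h1) (hp_nonneg j)
    _ = p j := mul_one _

include hp_nonneg hp hf in
lemma aux_f_nonneg {s : ℝ} (h0 : 0 ≤ s) : 0 ≤ f s := by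
  rw [hf]
  exact tsum_nonneg (fun j => mul_nonneg (hp_nonneg j) (pow_nonneg h0 j))

include hp_nonneg hp hp_sum hjp hmean hf in
lemma aux_f_lt_one {s : ℝ} (h0 : 0 ≤ s) (h1 : s < 1) : f s < 1 := by
  obtain ⟨j0, hj0, hpj0⟩ : ∃ j : ℕ, 1 ≤ j ∧ 0 < p j := by
    by_contra h
    push_neg at h
    have hz : ∀ j : ℕ, (j:ℝ) * p j = 0 := by
      intro j
      rcases Nat.eq_zero_or_pos j with h' | h'
      · simp [h']
      · have := le_antisymm (h j h') (hp_nonneg j)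
        simp [this]
    rw [tsum_congr hz] at hmean
    simp at hmean
  rw [hf, ← hp_sum]
  refine Summable.tsum_lt_tsum (i := j0) (fun j => ?_) ?_ (aux_summable_pow' hp_nonneg hp h0 h1.le) hp
  · calc p j * s ^ j ≤ p j * 1 :=
        mul_le_mul_of_nonneg_left (pow_le_one₀ h0 h1.le) (hp_nonneg j)
      _ = p j := mul_one _
  · have h2 : s ^ j0 < 1 := pow_lt_one₀ h0 h1 (by omega)
    nlinarith [h2, hpj0]

include hp_nonneg hp hp_sum hjp hmean hf in
lemma aux_eps (ε : ℝ) (hε : 0 < ε) (hε1 : ε ≤ 1) :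
    ∃ s0 : ℝ, 0 ≤ s0 ∧ s0 < 1 ∧ ∀ s, s0 ≤ s → s < 1 → f s - s ≤ ε * (1 - s) := by
  have htend := (hjp.hasSum).tendsto_sum_nat
  rw [hmean] at htend
  have hev : ∀ᶠ n in atTop, 1 - ε/2 ≤ ∑ j ∈ Finset.range n, (j:ℝ) * p j := by
    apply (htend.eventually (eventually_ge_nhds ?_)); linarith
  obtain ⟨J, hJ1, hJ⟩ : ∃ J : ℕ, 1 ≤ J ∧ 1 - ε/2 ≤ ∑ j ∈ Finset.range J, (j:ℝ) * p j := by
    rcases (hev.and (eventually_ge_atTop 1)).exists with ⟨J, h1, h2⟩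
    exact ⟨J, h2, h1⟩
  have hJpos : (1:ℝ) ≤ J := by exact_mod_cast hJ1
  set δ : ℝ := ε / (4 * J) with hδdef
  have hδpos : 0 < δ := div_pos hε (by linarith)
  have hδ4 : δ * (4 * J) = ε := by rw [hδdef]; exact div_mul_cancel₀ ε (ne_of_gt (by linarith))
  have hδle : δ ≤ 1/4 := by
    rw [hδdef, div_le_iff₀ (by linarith)]; nlinarith
  refine ⟨1 - δ, by linarith, by linarith, fun s hs0 hs1 => ?_⟩
  have hs0' : 0 ≤ s := le_trans (by linarith) hs0
  have hsJ : 1 - (J:ℝ) * δ ≤ s ^ J := by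
    calc (1 : ℝ) - (J:ℝ) * δ = 1 + (J:ℝ) * (-δ) := by ring
      _ ≤ (1 + (-δ)) ^ J := one_add_mul_le_pow (by linarith) J
      _ = (1 - δ) ^ J := by ring_nf
      _ ≤ s ^ J := pow_le_pow_left₀ (by linarith) hs0 J
  have key : (1 - ε/2) * (s ^ J * (1 - s)) ≤ 1 - f s := by
    have hsum := aux_summable_pow' hp_nonneg hp hs0' hs1.le
    have hfs : 1 - f s = ∑' j : ℕ, p j * (1 - s ^ j) := by
      have h1 : (fun j : ℕ => p j * (1 - s ^ j)) = fun j : ℕ => p j - p j * s ^ j := by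
        funext j; ring
      rw [h1, Summable.tsum_sub hp hsum, hp_sum, hf]
    have hterm : ∀ j ∈ Finset.range J, (j:ℝ) * p j * (s ^ J * (1 - s)) ≤ p j * (1 - s ^ j) := by
      intro j hj
      rw [Finset.mem_range] at hj
      have hgeo : 1 - s ^ j = (∑ i ∈ Finset.range j, s ^ i) * (1 - s) := by
        have h := geom_sum_mul s j
        nlinarith [h]
      have hsum_ge : (j:ℝ) * s ^ J ≤ ∑ i ∈ Finset.range j, s ^ i := by
        calc (j:ℝ) * s ^ J = ∑ _i ∈ Finset.range j, s ^ J := by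
              rw [Finset.sum_const, Finset.card_range, nsmul_eq_mul]
          _ ≤ ∑ i ∈ Finset.range j, s ^ i := by
              apply Finset.sum_le_sum
              intro i hi
              rw [Finset.mem_range] at hi
              exact pow_le_pow_of_le_one hs0' hs1.le (by omega)
      rw [hgeo]
      calc (j:ℝ) * p j * (s ^ J * (1 - s)) = p j * (((j:ℝ) * s ^ J) * (1 - s)) := by ring
        _ ≤ p j * ((∑ i ∈ Finset.range j, s ^ i) * (1 - s)) := by
            apply mul_le_mul_of_nonneg_left _ (hp_nonneg j)
            apply mul_le_mul_of_nonneg_right hsum_ge (by linarith)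
    calc (1 - ε/2) * (s ^ J * (1 - s)) ≤ (∑ j ∈ Finset.range J, (j:ℝ) * p j) * (s ^ J * (1 - s)) := by
          exact mul_le_mul_of_nonneg_right hJ
            (mul_nonneg (pow_nonneg hs0' J) (by linarith))
      _ = ∑ j ∈ Finset.range J, (j:ℝ) * p j * (s ^ J * (1 - s)) := by rw [Finset.sum_mul]
      _ ≤ ∑ j ∈ Finset.range J, p j * (1 - s ^ j) := Finset.sum_le_sum hterm
      _ ≤ ∑' j : ℕ, p j * (1 - s ^ j) := by
          refine Summable.sum_le_tsum _ (fun j _ => ?_) ((hp.sub hsum).congr (fun j => by ring))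
          apply mul_nonneg (hp_nonneg j)
          have := pow_le_one₀ hs0' hs1.le (n := j); linarith
      _ = 1 - f s := hfs.symm
  have hsJ' : (1 - ε/4) * (1-s) ≤ s ^ J * (1 - s) := by
    apply mul_le_mul_of_nonneg_right _ (by linarith)
    calc (1:ℝ) - ε/4 = 1 - (J:ℝ) * δ + ((J:ℝ)*δ - ε/4) := by ring
      _ ≤ 1 - (J:ℝ) * δ := by nlinarith
      _ ≤ s ^ J := hsJ
  nlinarith [key, hsJ', sq_nonneg ε, mul_le_mul_of_nonneg_left hsJ' (show (0:ℝ) ≤ 1 - ε/2 by linarith)]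
end


lemma aux_g_tendsto {ν : ℝ} (hν : 0 < ν) {L f : ℝ → ℝ}
    (hLpos : ∀ x : ℝ, 0 < x → 0 < L x)
    (hfΛ : ∀ s ∈ Set.Ico (0 : ℝ) 1, f s - s = (1 - s) ^ (1 + ν) * L (1 / (1 - s)))
    (heps : ∀ ε : ℝ, 0 < ε → ε ≤ 1 →
      ∃ s0 : ℝ, 0 ≤ s0 ∧ s0 < 1 ∧ ∀ s, s0 ≤ s → s < 1 → f s - s ≤ ε * (1 - s)) :
    Tendsto (fun x => L x / x ^ ν) atTop (𝓝 0) := by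
  rw [NormedAddCommGroup.tendsto_nhds_zero]
  intro ε hε
  set ε' : ℝ := min (ε/2) 1 with hε'def
  have hε'pos : 0 < ε' := lt_min (by linarith) one_pos
  have hε'le : ε' ≤ 1 := min_le_right _ _
  have hε'lt : ε' < ε := lt_of_le_of_lt (min_le_left _ _) (by linarith)
  obtain ⟨s0, hs00, hs01, hs0⟩ := heps ε' hε'pos hε'le
  filter_upwards [eventually_ge_atTop (max 2 (2/(1-s0)))] with x hx
  have hx2 : (2:ℝ) ≤ x := le_trans (le_max_left _ _) hx
  have hxpos : (0:ℝ) < x := by linarith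
  have hxs : 2/(1-s0) ≤ x := le_trans (le_max_right _ _) hx
  have h1s0 : (0:ℝ) < 1 - s0 := by linarith
  set s : ℝ := 1 - 1/x with hsdef
  have hinv : (0:ℝ) < 1/x := by positivity
  have hinv2 : 1/x ≤ (1-s0)/2 := by
    have h2 : 2 ≤ x * (1 - s0) := by
      have := (div_le_iff₀ h1s0).mp hxs
      linarith
    rw [div_le_div_iff₀ hxpos (by linarith : (0:ℝ) < 2)]
    nlinarith
  have hss0 : s0 ≤ s := by rw [hsdef]; nlinarith
  have hs1 : s < 1 := by rw [hsdef]; linarith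
  have hs0' : (0:ℝ) ≤ s := le_trans hs00 hss0
  have h1ms : 1 - s = 1/x := by rw [hsdef]; ring
  have hrecip : 1/(1-s) = x := by rw [h1ms, one_div_one_div]
  have hL : f s - s = L x / (x * x ^ ν) := by
    rw [hfΛ s ⟨hs0', hs1⟩, h1ms, one_div_one_div, one_div, Real.inv_rpow hxpos.le,
      Real.rpow_add hxpos, Real.rpow_one]
    field_simp
  have hxν : 0 < x ^ ν := Real.rpow_pos_of_pos hxpos ν
  have hLx : 0 < L x := hLpos x hxpos
  have hval : L x / x ^ ν = (f s - s) * x := by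
    rw [hL]; field_simp
  have hb : (f s - s) * x ≤ ε' := by
    have h2 := hs0 s hss0 hs1
    rw [h1ms] at h2
    calc (f s - s) * x ≤ (ε' * (1/x)) * x := mul_le_mul_of_nonneg_right h2 hxpos.le
      _ = ε' := by field_simp
  rw [Real.norm_eq_abs, abs_of_nonneg (div_nonneg hLx.le hxν.le), hval]
  exact lt_of_le_of_lt hb hε'lt


lemma aux_geom_bound {θ : ℝ} (h0 : 0 ≤ θ) (h1 : θ < 1) (n : ℕ) :
    ∑ i ∈ Finset.range n, θ ^ i ≤ 1 / (1 - θ) := by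
  rw [geom_sum_eq (ne_of_lt h1)]
  have h2 : (θ ^ n - 1) / (θ - 1) = (1 - θ ^ n) / (1 - θ) := by
    rw [← neg_sub (θ^n) 1, ← neg_sub θ 1, neg_div_neg_eq]
  rw [h2]
  exact div_le_div₀ zero_le_one (by nlinarith [pow_nonneg h0 n]) (by linarith) le_rfl

lemma aux_dyadic {ν K θ x0 : ℝ} {L : ℝ → ℝ}
    (hLpos : ∀ x : ℝ, 0 < x → 0 < L x)
    (hK : 0 < K) (hθ0 : 0 < θ) (hθ1 : θ < 1) (hx01 : 1 ≤ x0)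
    (hstep : ∀ y, x0 ≤ y → |L (2*y) - L y| ≤ K * L y * (L y / y ^ ν))
    (hsmall : ∀ y, x0 ≤ y → K * (L y / y ^ ν) ≤ (1-θ)/4)
    (hcontract : ∀ y, x0 ≤ y → L (2*y) / (2*y) ^ ν ≤ θ * (L y / y ^ ν))
    (x : ℝ) (hx : x0 ≤ x) :
    ∃ Cx : ℝ, Tendsto (fun k : ℕ => L (2^k * x)) atTop (𝓝 Cx) ∧
      L x / 2 ≤ Cx ∧ Cx ≤ 2 * L x ∧
      |L x - Cx| ≤ (2*K/(1-θ)) * (L x)^2 * x ^ (-ν) := by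
  have hxpos : (0:ℝ) < x := by linarith
  set a : ℕ → ℝ := fun k => L (2^k * x) with ha
  set g : ℕ → ℝ := fun k => a k / (2^k * x) ^ ν with hg
  have hy : ∀ k : ℕ, x0 ≤ 2^k * x := by
    intro k
    have h1 : (1:ℝ) ≤ 2^k := one_le_pow₀ (by norm_num)
    nlinarith
  have hypos : ∀ k : ℕ, (0:ℝ) < 2^k * x := fun k => by positivity
  have hapos : ∀ k, 0 < a k := fun k => hLpos _ (hypos k)
  have hgpos : ∀ k, 0 < g k := fun k =>
    div_pos (hapos k) (Real.rpow_pos_of_pos (hypos k) ν)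
  have hrec : ∀ k : ℕ, (2:ℝ)^(k+1) * x = 2*(2^k * x) := fun k => by ring
  have hstep' : ∀ k, |a (k+1) - a k| ≤ K * a k * g k := by
    intro k
    have := hstep _ (hy k)
    rw [← hrec k] at this
    exact this
  have hcon' : ∀ k, g (k+1) ≤ θ * g k := by
    intro k
    have := hcontract _ (hy k)
    rw [← hrec k] at this
    exact this
  have hsm' : ∀ k, K * g k ≤ (1-θ)/4 := fun k => hsmall _ (hy k)
  have claim2 : ∀ k, g k ≤ θ^k * g 0 := by
    intro k
    induction k with
    | zero => simp
    | succ n ih =>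
      calc g (n+1) ≤ θ * g n := hcon' n
        _ ≤ θ * (θ^n * g 0) := mul_le_mul_of_nonneg_left ih hθ0.le
        _ = θ^(n+1) * g 0 := by ring
  have claim3 : ∀ k, a k ≤ 2 * a 0 := by
    have hexp : ∀ k, a k ≤ a 0 * Real.exp (K * g 0 * (∑ i ∈ Finset.range k, θ^i)) := by
      intro k
      induction k with
      | zero => simp [Real.exp_nonneg, le_mul_iff_one_le_right (hapos 0)]
      | succ n ih =>
        have h1 : a (n+1) ≤ a n * (1 + K * g n) := by
          have := (abs_le.mp (hstep' n)).2
          nlinarith [hapos n]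
        have h2 : 1 + K * g n ≤ Real.exp (K * g 0 * θ^n) := by
          have hb : K * g n ≤ K * g 0 * θ^n := by
            have := claim2 n
            nlinarith [hgpos 0]
          calc 1 + K * g n ≤ 1 + K * g 0 * θ^n := by linarith
            _ ≤ Real.exp (K * g 0 * θ^n) := by
                have := Real.add_one_le_exp (K * g 0 * θ^n); linarith
        calc a (n+1) ≤ a n * (1 + K * g n) := h1
          _ ≤ (a 0 * Real.exp (K * g 0 * (∑ i ∈ Finset.range n, θ^i))) * Real.exp (K * g 0 * θ^n) := by
              apply mul_le_mul ih h2 (by nlinarith [mul_pos hK (hgpos n)])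
                (mul_nonneg (hapos 0).le (Real.exp_nonneg _))
          _ = a 0 * Real.exp (K * g 0 * (∑ i ∈ Finset.range (n+1), θ^i)) := by
              rw [mul_assoc, ← Real.exp_add, Finset.sum_range_succ]
              congr 2
              ring
    intro k
    have hEb : K * g 0 * (∑ i ∈ Finset.range k, θ^i) ≤ 1/4 := by
      have h1 := aux_geom_bound hθ0.le hθ1 k
      have h2 := hsm' 0
      have h3 : (0:ℝ) ≤ ∑ i ∈ Finset.range k, θ^i :=
        Finset.sum_nonneg (fun i _ => pow_nonneg hθ0.le i)
      have h4 : (0:ℝ) < 1 - θ := by linarith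
      calc K * g 0 * (∑ i ∈ Finset.range k, θ^i) ≤ ((1-θ)/4) * (1/(1-θ)) := by
            apply mul_le_mul h2 h1 h3 (by linarith)
        _ = 1/4 := by field_simp
    have hexp2 : Real.exp (K * g 0 * (∑ i ∈ Finset.range k, θ^i)) ≤ 2 := by
      calc Real.exp (K * g 0 * (∑ i ∈ Finset.range k, θ^i)) ≤ Real.exp (Real.log 2) := by
            apply Real.exp_le_exp.mpr
            have := Real.log_two_gt_d9
            linarith
        _ = 2 := Real.exp_log two_pos
    calc a k ≤ a 0 * Real.exp (K * g 0 * (∑ i ∈ Finset.range k, θ^i)) := hexp k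
      _ ≤ a 0 * 2 := mul_le_mul_of_nonneg_left hexp2 (hapos 0).le
      _ = 2 * a 0 := by ring
  have claim4 : ∀ k, dist (a k) (a (k+1)) ≤ (2 * a 0 * (K * g 0)) * θ^k := by
    intro k
    rw [Real.dist_eq, abs_sub_comm]
    calc |a (k+1) - a k| ≤ K * a k * g k := hstep' k
      _ ≤ K * (2 * a 0) * (θ^k * g 0) := by
          apply mul_le_mul (mul_le_mul_of_nonneg_left (claim3 k) hK.le) (claim2 k)
            (hgpos k).le (mul_nonneg hK.le (by nlinarith [hapos 0]))
      _ = (2 * a 0 * (K * g 0)) * θ^k := by ring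
  obtain ⟨Cx, hCx⟩ := cauchySeq_tendsto_of_complete
    (cauchySeq_of_le_geometric θ (2 * a 0 * (K * g 0)) hθ1 claim4)
  have hd0 : dist (a 0) Cx ≤ (2 * a 0 * (K * g 0)) / (1 - θ) :=
    dist_le_of_le_geometric_of_tendsto₀ θ _ hθ1 claim4 hCx
  have ha0 : a 0 = L x := by simp [ha]
  have hg0 : g 0 = L x / x ^ ν := by simp [hg, ha]
  have hdb : dist (a 0) Cx ≤ a 0 / 2 := by
    have h2 := hsm' 0
    have h4 : (0:ℝ) < 1 - θ := by linarith
    calc dist (a 0) Cx ≤ (2 * a 0 * (K * g 0)) / (1 - θ) := hd0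
      _ ≤ (2 * a 0 * ((1-θ)/4)) / (1 - θ) := by
          have h5 : 2 * a 0 * (K * g 0) ≤ 2 * a 0 * ((1-θ)/4) :=
            mul_le_mul_of_nonneg_left h2 (by nlinarith [hapos 0])
          gcongr
      _ = a 0 / 2 := by field_simp; ring
  refine ⟨Cx, hCx, ?_, ?_, ?_⟩
  · have habs := abs_le.mp (by rwa [Real.dist_eq] at hdb)
    rw [← ha0]
    linarith [habs.1, habs.2]
  · have habs := abs_le.mp (by rwa [Real.dist_eq] at hdb)
    rw [← ha0]
    linarith [habs.1, habs.2, hapos 0]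
  · have hxν : x ^ ν ≠ 0 := ne_of_gt (Real.rpow_pos_of_pos hxpos ν)
    have hθne : (1:ℝ) - θ ≠ 0 := by intro h; rw [sub_eq_zero] at h; linarith
    have heq : (2 * a 0 * (K * g 0)) / (1 - θ) = (2*K/(1-θ)) * (L x)^2 * x ^ (-ν) := by
      rw [ha0, hg0, Real.rpow_neg hxpos.le]
      field_simp
    rw [← ha0] at heq ⊢
    rw [← heq, ← Real.dist_eq]
    exact hd0

lemma aux_L_limit {ν : ℝ} (hν0 : 0 < ν) {L : ℝ → ℝ}
    (hLpos : ∀ x : ℝ, 0 < x → 0 < L x)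
    (hSV : ∀ l : ℝ, 0 < l → Tendsto (fun x => L (l * x) / L x) atTop (𝓝 1))
    (hRL2 : (fun x => L (2 * x) / L x - 1) =O[atTop] (fun x => L x / x ^ ν))
    (hg : Tendsto (fun x => L x / x ^ ν) atTop (𝓝 0)) :
    ∃ C D x0 : ℝ, 0 < C ∧ 0 < D ∧ 1 ≤ x0 ∧
      ∀ x, x0 ≤ x → C/2 ≤ L x ∧ L x ≤ 2*C ∧ |L x - C| ≤ D * x ^ (-ν) := by
  rw [isBigO_iff] at hRL2
  obtain ⟨c, hc⟩ := hRL2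
  set K : ℝ := max c 1 with hKdef
  have hK : (0:ℝ) < K := lt_of_lt_of_le one_pos (le_max_right _ _)
  set twoν : ℝ := (2:ℝ) ^ ν with h2νdef
  have h2ν : 1 < twoν :=
    (Real.one_lt_rpow_iff_of_pos two_pos).mpr (Or.inl ⟨one_lt_two, hν0⟩)
  have h2νpos : 0 < twoν := by linarith
  set δ : ℝ := (twoν - 1)/2 with hδdef
  have hδpos : 0 < δ := by rw [hδdef]; linarith
  set θ : ℝ := (1 + δ)/twoν with hθdef
  have hθ0 : 0 < θ := div_pos (by linarith) h2νpos
  have hθ1 : θ < 1 := by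
    rw [hθdef, div_lt_one h2νpos, hδdef]; linarith
  set δ₀ : ℝ := min δ ((1-θ)/4) with hδ₀def
  have hδ₀pos : 0 < δ₀ := lt_min hδpos (by linarith)
  have hg2 : ∀ᶠ x in atTop, K * (L x / x ^ ν) ≤ δ₀ := by
    have h1 : (0:ℝ) < δ₀ / K := div_pos hδ₀pos hK
    filter_upwards [hg.eventually (eventually_le_nhds h1)] with x hx
    calc K * (L x / x ^ ν) ≤ K * (δ₀ / K) := mul_le_mul_of_nonneg_left hx hK.le
      _ = δ₀ := by field_simp
  obtain ⟨x0', hx0'⟩ := (hc.and hg2).exists_forall_of_atTop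
  set x0 : ℝ := max x0' 1 with hx0def
  have hx01 : (1:ℝ) ≤ x0 := le_max_right _ _
  have hx0pos : (0:ℝ) < x0 := by linarith
  have hprop : ∀ y, x0 ≤ y → |L (2*y)/L y - 1| ≤ K * (L y / y ^ ν) ∧ K * (L y / y ^ ν) ≤ δ₀ := by
    intro y hy
    have hy' : x0' ≤ y := le_trans (le_max_left _ _) hy
    have hypos : (0:ℝ) < y := by linarith
    obtain ⟨h1, h2⟩ := hx0' y hy'
    refine ⟨?_, h2⟩
    have hgn : (0:ℝ) ≤ L y / y ^ ν :=
      div_nonneg (hLpos y hypos).le (Real.rpow_pos_of_pos hypos ν).le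
    rw [Real.norm_eq_abs, Real.norm_eq_abs, abs_of_nonneg hgn] at h1
    calc |L (2*y)/L y - 1| ≤ c * (L y / y ^ ν) := h1
      _ ≤ K * (L y / y ^ ν) := mul_le_mul_of_nonneg_right (le_max_left _ _) hgn
  have hstep : ∀ y, x0 ≤ y → |L (2*y) - L y| ≤ K * L y * (L y / y ^ ν) := by
    intro y hy
    have hypos : (0:ℝ) < y := by linarith
    have hLy := hLpos y hypos
    have h1 := (hprop y hy).1
    have h2 : L (2*y) - L y = L y * (L (2*y)/L y - 1) := by field_simp
    rw [h2, abs_mul, abs_of_pos hLy]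
    calc L y * |L (2*y)/L y - 1| ≤ L y * (K * (L y / y ^ ν)) :=
          mul_le_mul_of_nonneg_left h1 hLy.le
      _ = K * L y * (L y / y ^ ν) := by ring
  have hsmall : ∀ y, x0 ≤ y → K * (L y / y ^ ν) ≤ (1-θ)/4 :=
    fun y hy => le_trans (hprop y hy).2 (min_le_right _ _)
  have hcontract : ∀ y, x0 ≤ y → L (2*y) / (2*y) ^ ν ≤ θ * (L y / y ^ ν) := by
    intro y hy
    have hypos : (0:ℝ) < y := by linarith
    have hLy := hLpos y hypos
    have hyν := Real.rpow_pos_of_pos hypos ν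
    have hup : L (2*y) ≤ L y * (1 + δ) := by
      have h1 := (abs_le.mp ((hprop y hy).1)).2
      have h2 : K * (L y / y ^ ν) ≤ δ := le_trans (hprop y hy).2 (min_le_left _ _)
      have h3 : L (2*y)/L y ≤ 1 + δ := by linarith
      calc L (2*y) = (L (2*y)/L y) * L y := by field_simp
        _ ≤ (1 + δ) * L y := mul_le_mul_of_nonneg_right h3 hLy.le
        _ = L y * (1 + δ) := by ring
    have hmul : (2*y) ^ ν = twoν * y ^ ν := Real.mul_rpow (by norm_num) hypos.le
    rw [hmul]
    rw [div_le_iff₀ (by positivity)]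
    rw [hθdef]
    have : θ * (L y / y ^ ν) * (twoν * y ^ ν) = L y * (1+δ) := by
      rw [hθdef]; field_simp
    calc L (2*y) ≤ L y * (1 + δ) := hup
      _ = (1+δ)/twoν * (L y / y ^ ν) * (twoν * y ^ ν) := by field_simp
  have main := fun x hx => aux_dyadic hLpos hK hθ0 hθ1 hx01 hstep hsmall hcontract x hx
  obtain ⟨C, hCt, hC1, hC2, hC3⟩ := main x0 le_rfl
  have hCpos : 0 < C := lt_of_lt_of_le (half_pos (hLpos x0 hx0pos)) hC1
  have huniq : ∀ x, x0 ≤ x → ∀ Cx, Tendsto (fun k : ℕ => L (2^k * x)) atTop (𝓝 Cx) → Cx = C := by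
    intro x hx Cx hCx
    have hxpos : (0:ℝ) < x := by linarith
    have hpow : Tendsto (fun k : ℕ => (2:ℝ)^k * x0) atTop atTop :=
      (tendsto_pow_atTop_atTop_of_one_lt one_lt_two).atTop_mul_const hx0pos
    have hratio := (hSV (x/x0) (div_pos hxpos hx0pos)).comp hpow
    have heq : ∀ k : ℕ, (x/x0) * ((2:ℝ)^k * x0) = 2^k * x := by
      intro k; field_simp
    have hratio' : Tendsto (fun k : ℕ => L ((2:ℝ)^k * x) / L (2^k * x0)) atTop (𝓝 1) := by
      apply hratio.congr
      intro k
      simp only [Function.comp_apply, heq k]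
    have hmul := hratio'.mul hCt
    rw [one_mul] at hmul
    have hfinal : Tendsto (fun k : ℕ => L ((2:ℝ)^k * x)) atTop (𝓝 C) := by
      apply hmul.congr
      intro k
      have hne : L ((2:ℝ)^k * x0) ≠ 0 := ne_of_gt (hLpos _ (by positivity))
      field_simp
    exact tendsto_nhds_unique hCx hfinal
  have hθ4 : (0:ℝ) < 1 - θ := by linarith
  have hDpos : 0 < (2*K/(1-θ)) * (2*C)^2 :=
    mul_pos (div_pos (by linarith) hθ4) (pow_pos (by linarith) 2)
  refine ⟨C, (2*K/(1-θ)) * (2*C)^2, x0, hCpos, hDpos, hx01, ?_⟩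
  intro x hx
  obtain ⟨Cx, ht, h1, h2, h3⟩ := main x hx
  rw [huniq x hx Cx ht] at h1 h2 h3
  have hxpos : (0:ℝ) < x := by linarith
  refine ⟨by linarith, by linarith, ?_⟩
  calc |L x - C| ≤ (2*K/(1-θ)) * (L x)^2 * x ^ (-ν) := h3
    _ ≤ (2*K/(1-θ)) * (2*C)^2 * x ^ (-ν) := by
        apply mul_le_mul_of_nonneg_right _ (Real.rpow_nonneg hxpos.le _)
        apply mul_le_mul_of_nonneg_left _ (div_nonneg (by linarith) hθ4.le)
        nlinarith [hLpos x hxpos]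


lemma aux_rpow_lip {m M γ : ℝ} (hm : 0 < m) (hγ : γ < 0) :
    ∀ a ∈ Set.Icc m M, ∀ b ∈ Set.Icc m M,
      |a ^ γ - b ^ γ| ≤ ((-γ) * m ^ (γ-1)) * |a - b| := by
  intro a ha b hb
  have hdiff : ∀ x ∈ Set.Icc m M, DifferentiableAt ℝ (fun t : ℝ => t ^ γ) x := fun x hx =>
    (Real.hasDerivAt_rpow_const (Or.inl (ne_of_gt (lt_of_lt_of_le hm hx.1)))).differentiableAt
  have hderiv : ∀ x ∈ Set.Icc m M, ‖deriv (fun t : ℝ => t ^ γ) x‖ ≤ (-γ) * m ^ (γ-1) := by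
    intro x hx
    have hxpos : (0:ℝ) < x := lt_of_lt_of_le hm hx.1
    rw [(Real.hasDerivAt_rpow_const (Or.inl (ne_of_gt hxpos))).deriv, Real.norm_eq_abs,
      abs_mul, abs_of_neg hγ, abs_of_pos (Real.rpow_pos_of_pos hxpos _)]
    apply mul_le_mul_of_nonneg_left _ (by linarith)
    rw [show γ - 1 = -(1-γ) by ring, Real.rpow_neg hxpos.le, Real.rpow_neg hm.le]
    exact inv_anti₀ (Real.rpow_pos_of_pos hm _)
      (Real.rpow_le_rpow hm.le hx.1 (by linarith))
  have h := Convex.norm_image_sub_le_of_norm_deriv_le hdiff hderiv (convex_Icc m M) hb ha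
  simpa [Real.norm_eq_abs] using h

theorem stmt_8
    (p : ℕ → ℝ) (hp_nonneg : ∀ j, 0 ≤ p j) (hp0 : 0 < p 0)
    (hp_sum : ∑' j : ℕ, p j = 1) (hp_mean : ∑' j : ℕ, (j : ℝ) * p j = 1)
    (f : ℝ → ℝ) (hf : ∀ s : ℝ, f s = ∑' j : ℕ, p j * s ^ j)
    (ν : ℝ) (hν : ν ∈ Set.Ioo (0 : ℝ) 1)
    (L : ℝ → ℝ) (hLpos : ∀ x : ℝ, 0 < x → 0 < L x)
    (hSV : ∀ l : ℝ, 0 < l →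
      Filter.Tendsto (fun x => L (l * x) / L x) Filter.atTop (𝓝 1))
    (hfΛ : ∀ s ∈ Set.Ico (0 : ℝ) 1,
      f s - s = (1 - s) ^ (1 + ν) * L (1 / (1 - s)))
    (Λ : ℝ → ℝ) (hΛ : ∀ y ∈ Set.Ioc (0 : ℝ) 1, Λ y = y ^ ν * L (1 / y))
    (hRL : ∀ l : ℝ, 0 < l →
      (fun x => L (l * x) / L x - 1) =O[Filter.atTop] (fun x => L x / x ^ ν))
    (Q : ℕ → ℝ) (hQ : ∀ n, Q n = 1 - f^[n] 0)
    (N : ℕ → ℝ) (hN : ∀ n, N n = (L (1 / Q n)) ^ (-(1 / ν)))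
    :
    ∃ Cₗ : ℝ, 0 < Cₗ ∧ Filter.Tendsto L Filter.atTop (𝓝 Cₗ) ∧
      (fun n : ℕ => N n - Cₗ ^ (-(1 / ν))) =O[Filter.atTop]
        (fun n : ℕ => (n : ℝ) ^ (-ν)) := by
  have hp : Summable p := aux_summable hp_sum
  have hjp : Summable (fun j : ℕ => (j:ℝ) * p j) := aux_summable hp_mean
  have hν0 : (0:ℝ) < ν := hν.1
  have hν1 : ν < 1 := hν.2
  have heps := fun ε hε hε1 => aux_eps hp_nonneg hp hp_sum hjp hp_mean hf ε hε hε1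
  have hg := aux_g_tendsto hν0 hLpos hfΛ heps
  obtain ⟨C, D, x0, hCpos, hDpos, hx01, hbound⟩ :=
    aux_L_limit hν0 hLpos hSV (hRL 2 two_pos) hg
  have hx0pos : (0:ℝ) < x0 := by linarith
  have hLtend : Tendsto L atTop (𝓝 C) := by
    have h1 : Tendsto (fun x : ℝ => L x - C) atTop (𝓝 0) := by
      apply squeeze_zero_norm' (a := fun x => D * x ^ (-ν))
      · filter_upwards [eventually_ge_atTop x0] with x hx
        simpa [Real.norm_eq_abs] using (hbound x hx).2.2
      · simpa using (tendsto_rpow_neg_atTop hν0).const_mul D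
    have h2 := h1.add_const C
    simpa using h2
  -- Q facts
  have hs_mem : ∀ n : ℕ, f^[n] 0 ∈ Set.Ico (0:ℝ) 1 := by
    intro n
    induction n with
    | zero => exact ⟨le_rfl, one_pos⟩
    | succ n ih =>
      rw [Function.iterate_succ_apply']
      exact ⟨aux_f_nonneg hp_nonneg hp hf ih.1,
        aux_f_lt_one hp_nonneg hp hp_sum hjp hp_mean hf ih.1 ih.2⟩
  have hQpos : ∀ n, 0 < Q n := fun n => by rw [hQ n]; linarith [(hs_mem n).2]
  have hQle1 : ∀ n, Q n ≤ 1 := fun n => by rw [hQ n]; linarith [(hs_mem n).1]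
  have hQrec : ∀ n, Q n - Q (n+1) = (Q n) ^ (1+ν) * L (1/Q n) := by
    intro n
    have h1 := hfΛ (f^[n] 0) (hs_mem n)
    rw [hQ n, hQ (n+1), Function.iterate_succ_apply']
    calc 1 - f^[n] 0 - (1 - f (f^[n] 0)) = f (f^[n] 0) - f^[n] 0 := by ring
      _ = (1 - f^[n] 0) ^ (1+ν) * L (1/(1 - f^[n] 0)) := h1
  have hLQpos : ∀ n, 0 < L (1/Q n) := fun n => hLpos _ (one_div_pos.mpr (hQpos n))
  have hrecpos : ∀ n, 0 < (Q n) ^ (1+ν) * L (1/Q n) := fun n =>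
    mul_pos (Real.rpow_pos_of_pos (hQpos n) _) (hLQpos n)
  have hQanti : Antitone Q :=
    antitone_nat_of_succ_le (fun n => by nlinarith [hQrec n, hrecpos n])
  have hQ0 : Tendsto Q atTop (𝓝 0) := by
    have hbdd : BddBelow (Set.range Q) := ⟨0, fun y ⟨n, hn⟩ => hn ▸ (hQpos n).le⟩
    have hlim := tendsto_atTop_ciInf hQanti hbdd
    set q := ⨅ n, Q n with hqdef
    have hq0 : 0 ≤ q := le_ciInf (fun n => (hQpos n).le)
    rcases eq_or_lt_of_le hq0 with h | hqpos
    · rwa [← h] at hlim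
    · exfalso
      have hqle : ∀ n, q ≤ Q n := fun n => ciInf_le hbdd n
      have hq1 : q ≤ 1 := le_trans (hqle 0) (hQle1 0)
      have hustar : 0 < q ^ (1+ν) * L (1/q) :=
        mul_pos (Real.rpow_pos_of_pos hqpos _) (hLpos _ (one_div_pos.mpr hqpos))
      have hfq := hfΛ (1-q) ⟨by linarith, by linarith⟩
      have hq2 : 1 - (1-q) = q := by ring
      rw [hq2] at hfq
      obtain ⟨n, hn⟩ := (hlim.eventually (eventually_lt_nhds
        (show q < q + q ^ (1+ν) * L (1/q) by linarith))).exists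
      have hsn : f^[n] 0 = 1 - Q n := by rw [hQ n]; ring
      have hle1 : f^[n] 0 ≤ 1 - q := by rw [hsn]; linarith [hqle n]
      have hlip := aux_lipf hp_nonneg hp hjp hp_mean hf (hs_mem n).1 hle1 (by linarith)
      have hfn : f (f^[n] 0) = 1 - Q (n+1) := by
        rw [hQ (n+1), Function.iterate_succ_apply']; ring
      have h3 : f (f^[n] 0) ≤ 1 - q := by rw [hfn]; linarith [hqle (n+1)]
      have h4 : (1 - q) - f^[n] 0 = Q n - q := by rw [hsn]; ring
      nlinarith [hlip, hfq, h3, h4, hn]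
  -- N0 and growth
  obtain ⟨N0, hN0⟩ := (hQ0.eventually (eventually_le_nhds
    (one_div_pos.mpr hx0pos))).exists_forall_of_atTop
  have hx0Q : ∀ n, N0 ≤ n → x0 ≤ 1/Q n := by
    intro n hn
    rw [le_div_iff₀ (hQpos n)]
    have h1 := hN0 n hn
    have h2 : x0 * Q n ≤ x0 * (1/x0) := mul_le_mul_of_nonneg_left h1 hx0pos.le
    rw [mul_one_div_cancel (ne_of_gt hx0pos)] at h2
    linarith
  have hstepgrow : ∀ n, N0 ≤ n → 1/Q n + C/2 ≤ 1/Q (n+1) := by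
    intro n hn
    set A := Q n with hA
    set B := Q (n+1) with hB
    have hApos := hQpos n
    have hBpos := hQpos (n+1)
    have hA1 := hQle1 n
    have hBA : B ≤ A := hQanti (Nat.le_succ n)
    have hrec : A - B = A ^ (1+ν) * L (1/A) := hQrec n
    have hℓ : C/2 ≤ L (1/A) := (hbound (1/A) (hx0Q n hn)).1
    have e1 : A ^ (ν-1) * (A * A) = A ^ (1+ν) := by
      rw [show A * A = A ^ ((2:ℕ):ℝ) by rw [Real.rpow_natCast]; ring,
        ← Real.rpow_add hApos]
      congr 1
      push_cast
      ring
    have e2 : (1:ℝ) ≤ A ^ (ν-1) := by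
      have := Real.rpow_le_rpow_of_exponent_ge hApos hA1 (show ν - 1 ≤ 0 by linarith)
      rwa [Real.rpow_zero] at this
    have e3 : 1/B - 1/A = (A - B)/(A*B) := by
      rw [div_sub_div _ _ (ne_of_gt hBpos) (ne_of_gt hApos), one_mul, mul_one, mul_comm B A]
    have e4 : (A - B)/(A*A) = A ^ (ν-1) * L (1/A) := by
      rw [hrec, ← e1]
      field_simp
      exact mul_div_cancel_left₀ (L (1/A)) (show A ≠ 0 from ne_of_gt hApos)
    have e6 : (A - B)/(A*A) ≤ (A - B)/(A*B) := by
      apply div_le_div_of_nonneg_left _ (by positivity) _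
      · nlinarith [hrecpos n, hrec]
      · nlinarith
    have e5 : 1 * (C/2) ≤ A ^ (ν-1) * L (1/A) :=
      mul_le_mul e2 hℓ (by linarith) (by linarith)
    have := e3 ▸ (le_trans (e4 ▸ e5) e6)
    linarith [this]
  have hgrow : ∀ n, N0 ≤ n → 1/(Q N0) + ((n:ℝ) - N0)*(C/2) ≤ 1/Q n := by
    intro n hn
    induction n, hn using Nat.le_induction with
    | base => simp
    | succ n hn ih =>
      have h1 := hstepgrow n hn
      push_cast
      push_cast at ih
      linarith
  -- final big-O
  set γ : ℝ := -(1/ν) with hγdef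
  have hγneg : γ < 0 := by
    rw [hγdef]
    have : (0:ℝ) < 1/ν := by positivity
    linarith
  set Lip : ℝ := (-γ) * (C/2) ^ (γ-1) with hLipdef
  have hLippos : 0 < Lip :=
    mul_pos (by linarith) (Real.rpow_pos_of_pos (half_pos hCpos) _)
  set Kc : ℝ := Lip * D * (4/C) ^ ν with hKcdef
  refine ⟨C, hCpos, hLtend, ?_⟩
  rw [isBigO_iff]
  refine ⟨Kc, ?_⟩
  filter_upwards [eventually_ge_atTop (max (2*N0+2) 1)] with n hn
  have hn1 : 1 ≤ n := le_trans (le_max_right _ _) hn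
  have hn2 : 2*N0+2 ≤ n := le_trans (le_max_left _ _) hn
  have hnN0 : N0 ≤ n := by omega
  have hnR : (2*(N0:ℝ)+2) ≤ (n:ℝ) := by exact_mod_cast hn2
  have hnpos : (0:ℝ) < n := by
    have : (1:ℝ) ≤ (n:ℝ) := by exact_mod_cast hn1
    linarith
  -- Q n ≤ 4/(C*n)
  have hQb : Q n ≤ 4/(C*(n:ℝ)) := by
    have h1 := hgrow n hnN0
    have h2 : (0:ℝ) < 1/Q N0 := one_div_pos.mpr (hQpos N0)
    have h3 : (n:ℝ)/2 ≤ (n:ℝ) - N0 := by linarith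
    have h4 : C*(n:ℝ)/4 ≤ 1/Q n := by nlinarith
    rw [le_div_iff₀ (by positivity)]
    have h5 : Q n * (C*(n:ℝ)/4) ≤ Q n * (1/Q n) :=
      mul_le_mul_of_nonneg_left h4 (hQpos n).le
    rw [mul_one_div_cancel (ne_of_gt (hQpos n))] at h5
    linarith
  -- Lipschitz bound
  have hLn := hbound (1/Q n) (hx0Q n hnN0)
  have hmem1 : L (1/Q n) ∈ Set.Icc (C/2) (2*C) := ⟨hLn.1, hLn.2.1⟩
  have hmem2 : C ∈ Set.Icc (C/2) (2*C) := ⟨by linarith, by linarith⟩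
  have hlip := aux_rpow_lip (half_pos hCpos) hγneg _ hmem1 _ hmem2
  have hinv : (1/Q n) ^ (-ν) = Q n ^ ν := by
    rw [one_div, Real.inv_rpow (hQpos n).le, Real.rpow_neg (hQpos n).le, inv_inv]
  have hsplit : (4/(C*(n:ℝ))) ^ ν = (4/C) ^ ν * (n:ℝ) ^ (-ν) := by
    rw [div_mul_eq_div_div, div_eq_mul_inv _ (n:ℝ),
      Real.mul_rpow (by positivity) (inv_nonneg.mpr hnpos.le),
      Real.inv_rpow hnpos.le, ← Real.rpow_neg hnpos.le]
  have hmono : Q n ^ ν ≤ (4/(C*(n:ℝ))) ^ ν :=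
    Real.rpow_le_rpow (hQpos n).le hQb hν0.le
  have hchain : |N n - C ^ γ| ≤ Kc * (n:ℝ) ^ (-ν) := by
    rw [hN n]
    calc |L (1/Q n) ^ γ - C ^ γ| ≤ Lip * |L (1/Q n) - C| := hlip
      _ ≤ Lip * (D * (1/Q n) ^ (-ν)) :=
          mul_le_mul_of_nonneg_left hLn.2.2 hLippos.le
      _ = Lip * D * (Q n ^ ν) := by rw [hinv]; ring
      _ ≤ Lip * D * ((4/C) ^ ν * (n:ℝ) ^ (-ν)) := by
          rw [← hsplit]
          exact mul_le_mul_of_nonneg_left (le_trans hmono (le_of_eq rfl))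
            (by positivity)
      _ = Kc * (n:ℝ) ^ (-ν) := by rw [hKcdef]; ring
  rw [Real.norm_eq_abs, Real.norm_eq_abs, abs_of_pos (Real.rpow_pos_of_pos hnpos _)]
  exact hchain
end

section
/- The function J(s) = (1 − f'(s))/Λ(1−s) − 1 satisfies J(s) → ν as s ↑ 1, i.e. ρ(s) := |ν − J(s)| → 0 as s ↑ 1. -/
open Filter Topology Asymptotics

set_option maxHeartbeats 1000000 in
theorem stmt_9
    (p : ℕ → ℝ) (hp_nonneg : ∀ j, 0 ≤ p j) (hp0 : 0 < p 0)
    (hp_sum : ∑' j : ℕ, p j = 1) (hp_mean : ∑' j : ℕ, (j : ℝ) * p j = 1)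
    (f : ℝ → ℝ) (hf : ∀ s : ℝ, f s = ∑' j : ℕ, p j * s ^ j)
    (ν : ℝ) (hν : ν ∈ Set.Ioo (0 : ℝ) 1)
    (L : ℝ → ℝ) (hLpos : ∀ x : ℝ, 0 < x → 0 < L x)
    (hSV : ∀ l : ℝ, 0 < l →
      Filter.Tendsto (fun x => L (l * x) / L x) Filter.atTop (𝓝 1))
    (hfΛ : ∀ s ∈ Set.Ico (0 : ℝ) 1,
      f s - s = (1 - s) ^ (1 + ν) * L (1 / (1 - s)))
    (Λ : ℝ → ℝ) (hΛ : ∀ y ∈ Set.Ioc (0 : ℝ) 1, Λ y = y ^ ν * L (1 / y))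
    (J : ℝ → ℝ) (hJ : ∀ s : ℝ, J s = (1 - deriv f s) / Λ (1 - s) - 1)
    :
    Filter.Tendsto J (nhdsWithin 1 (Set.Ico (0 : ℝ) 1)) (𝓝 ν) := by
  obtain ⟨hν0, hν1⟩ := hν
  -- summability
  have hps : Summable p := by
    by_contra h
    rw [tsum_eq_zero_of_not_summable h] at hp_sum
    norm_num at hp_sum
  have hjs : Summable (fun j : ℕ => (j : ℝ) * p j) := by
    by_contra h
    rw [tsum_eq_zero_of_not_summable h] at hp_mean
    norm_num at hp_mean
  -- bound on derivative terms
  have hbound : ∀ (j : ℕ) (x : ℝ), x ∈ Set.Ioo (-1 : ℝ) 1 →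
      ‖p j * ((j : ℝ) * x ^ (j - 1))‖ ≤ (j : ℝ) * p j := by
    intro j x hx
    have hxa : |x| ≤ 1 := abs_le.2 ⟨hx.1.le, hx.2.le⟩
    rw [Real.norm_eq_abs, abs_mul, abs_mul, abs_of_nonneg (hp_nonneg j), Nat.abs_cast, abs_pow]
    calc p j * ((j : ℝ) * |x| ^ (j - 1)) ≤ p j * ((j : ℝ) * 1) :=
          mul_le_mul_of_nonneg_left (mul_le_mul_of_nonneg_left
            (pow_le_one₀ (abs_nonneg x) hxa) (Nat.cast_nonneg j)) (hp_nonneg j)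
      _ = (j : ℝ) * p j := by ring
  -- summability of the series at 0
  have h00 : Summable (fun j : ℕ => p j * (0 : ℝ) ^ j) := by
    apply Summable.of_nonneg_of_le
      (fun j => mul_nonneg (hp_nonneg j) (pow_nonneg le_rfl j)) (fun j => ?_) hps
    calc p j * (0 : ℝ) ^ j ≤ p j * 1 :=
          mul_le_mul_of_nonneg_left (pow_le_one₀ le_rfl zero_le_one) (hp_nonneg j)
      _ = p j := mul_one _
  -- derivative of f inside (-1,1)
  have hkey : ∀ x ∈ Set.Ioo (-1 : ℝ) 1,
      HasDerivAt f (∑' j : ℕ, p j * ((j : ℝ) * x ^ (j - 1))) x := by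
    intro x hx
    have h := hasDerivAt_tsum_of_isPreconnected (u := fun j : ℕ => (j : ℝ) * p j)
      (g := fun (j : ℕ) (z : ℝ) => p j * z ^ j)
      (g' := fun (j : ℕ) (z : ℝ) => p j * ((j : ℝ) * z ^ (j - 1)))
      hjs isOpen_Ioo (convex_Ioo (-1 : ℝ) 1).isPreconnected
      (fun n y _ => (hasDerivAt_pow n y).const_mul (p n))
      (fun n y hy => hbound n y hy)
      (show (0 : ℝ) ∈ Set.Ioo (-1 : ℝ) 1 by norm_num) h00 hx
    have hfe : f = fun z : ℝ => ∑' j : ℕ, p j * z ^ j := funext hf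
    rw [hfe]
    exact h
  have hsummx : ∀ x ∈ Set.Ioo (-1 : ℝ) 1,
      Summable (fun j : ℕ => p j * ((j : ℝ) * x ^ (j - 1))) := by
    intro x hx
    exact Summable.of_norm_bounded hjs (fun j => hbound j x hx)
  have hderiv : ∀ x ∈ Set.Ioo (-1 : ℝ) 1,
      deriv f x = ∑' j : ℕ, p j * ((j : ℝ) * x ^ (j - 1)) :=
    fun x hx => (hkey x hx).deriv
  -- monotonicity of deriv f on [0,1)
  have hmono : ∀ s t : ℝ, 0 ≤ s → s ≤ t → t < 1 → deriv f s ≤ deriv f t := by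
    intro s t hs hst ht
    have hsI : s ∈ Set.Ioo (-1 : ℝ) 1 := ⟨by linarith, by linarith⟩
    have htI : t ∈ Set.Ioo (-1 : ℝ) 1 := ⟨by linarith, ht⟩
    rw [hderiv s hsI, hderiv t htI]
    refine Summable.tsum_le_tsum (fun j => ?_) (hsummx s hsI) (hsummx t htI)
    exact mul_le_mul_of_nonneg_left (mul_le_mul_of_nonneg_left
      (pow_le_pow_left₀ hs hst _) (Nat.cast_nonneg j)) (hp_nonneg j)
  set D : ℝ → ℝ := fun y => 1 - deriv f (1 - y) with hD
  set h₀ : ℝ → ℝ := fun y => f (1 - y) - (1 - y) with hh₀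
  -- derivative of h₀
  have hder : ∀ y : ℝ, 0 < y → y < 2 → HasDerivAt h₀ (D y) y := by
    intro y hy hy2
    have h1 : (1 : ℝ) - y ∈ Set.Ioo (-1 : ℝ) 1 := ⟨by linarith, by linarith⟩
    have hc : HasDerivAt (fun z : ℝ => 1 - z) (-1) y := by
      simpa using (hasDerivAt_id y).const_sub 1
    have hfd : HasDerivAt f (deriv f (1 - y)) (1 - y) :=
      (hkey _ h1).differentiableAt.hasDerivAt
    have hcomp : HasDerivAt (fun z : ℝ => f (1 - z)) (deriv f (1 - y) * (-1)) y :=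
      HasDerivAt.comp y hfd hc
    have h2 : HasDerivAt (fun z : ℝ => f (1 - z) - (1 - z))
        (deriv f (1 - y) * (-1) - (-1)) y := hcomp.sub hc
    have : deriv f (1 - y) * (-1) - (-1) = D y := by rw [hD]; ring
    rw [this] at h2
    exact h2
  -- formula and positivity for h₀
  have hform : ∀ y : ℝ, 0 < y → y ≤ 1 → h₀ y = y ^ (1 + ν) * L (1 / y) := by
    intro y hy hy1
    have hs : (1 : ℝ) - y ∈ Set.Ico (0 : ℝ) 1 := ⟨by linarith, by linarith⟩
    have := hfΛ (1 - y) hs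
    rw [hh₀]
    simp only
    rw [this]
    norm_num
  have hpos : ∀ y : ℝ, 0 < y → y ≤ 1 → 0 < h₀ y := by
    intro y hy hy1
    rw [hform y hy hy1]
    exact mul_pos (Real.rpow_pos_of_pos hy _) (hLpos _ (by positivity))
  -- monotonicity of D on (0,1]
  have hDmono : ∀ y z : ℝ, 0 < y → y ≤ z → z ≤ 1 → D y ≤ D z := by
    intro y z hy hyz hz1
    have := hmono (1 - z) (1 - y) (by linarith) (by linarith) (by linarith)
    simp only [hD]
    linarith
  -- mean value theorem bounds
  have hmvt : ∀ y z : ℝ, 0 < y → y < z → z ≤ 1 →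
      D y * (z - y) ≤ h₀ z - h₀ y ∧ h₀ z - h₀ y ≤ D z * (z - y) := by
    intro y z hy hyz hz1
    obtain ⟨c, hc, hceq⟩ := exists_hasDerivAt_eq_slope h₀ D hyz
      (fun x hx => (hder x (by linarith [hx.1]) (by linarith [hx.2])).continuousAt.continuousWithinAt)
      (fun x hx => hder x (by linarith [hx.1]) (by linarith [hx.2]))
    have heq : h₀ z - h₀ y = D c * (z - y) := by
      rw [hceq, div_mul_cancel₀ _ (ne_of_gt (by linarith : (0:ℝ) < z - y))]
    have h1 : D y ≤ D c := hDmono y c hy hc.1.le (by linarith [hc.2])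
    have h2 : D c ≤ D z := hDmono c z (by linarith [hc.1]) hc.2.le hz1
    have hzy : (0 : ℝ) ≤ z - y := by linarith
    constructor
    · rw [heq]; exact mul_le_mul_of_nonneg_right h1 hzy
    · rw [heq]; exact mul_le_mul_of_nonneg_right h2 hzy
  -- ratio limit from slow variation
  have hinv : Tendsto (fun y : ℝ => 1 / y) (𝓝[>] (0 : ℝ)) atTop := by
    simpa [one_div] using tendsto_inv_nhdsGT_zero (𝕜 := ℝ)
  have hratio : ∀ b : ℝ, 0 < b →
      Tendsto (fun y => h₀ (b * y) / h₀ y) (𝓝[>] (0 : ℝ)) (𝓝 (b ^ (1 + ν))) := by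
    intro b hb
    have hLlim : Tendsto (fun y : ℝ => L (b⁻¹ * (1 / y)) / L (1 / y)) (𝓝[>] (0 : ℝ)) (𝓝 1) :=
      (hSV b⁻¹ (by positivity)).comp hinv
    have hT : Tendsto (fun y : ℝ => b ^ (1 + ν) * (L (b⁻¹ * (1 / y)) / L (1 / y)))
        (𝓝[>] (0 : ℝ)) (𝓝 (b ^ (1 + ν) * 1)) := tendsto_const_nhds.mul hLlim
    rw [mul_one] at hT
    apply hT.congr'
    have hmin : (0 : ℝ) < min 1 b⁻¹ := by positivity
    filter_upwards [Ioo_mem_nhdsGT hmin] with y hy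
    have hy0 : 0 < y := hy.1
    have hy1 : y ≤ 1 := le_of_lt (lt_of_lt_of_le hy.2 (min_le_left _ _))
    have hby : b * y ≤ 1 := by
      have : y < b⁻¹ := lt_of_lt_of_le hy.2 (min_le_right _ _)
      rw [← mul_inv_cancel₀ (ne_of_gt hb)]
      exact mul_le_mul_of_nonneg_left (le_of_lt this) hb.le
    rw [hform y hy0 hy1, hform (b * y) (by positivity) hby,
      Real.mul_rpow hb.le hy0.le,
      show (1 : ℝ) / (b * y) = b⁻¹ * (1 / y) by rw [one_div, mul_inv, one_div]]
    have hyν : (0 : ℝ) < y ^ (1 + ν) := Real.rpow_pos_of_pos hy0 _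
    have hLy : (0 : ℝ) < L (1 / y) := hLpos _ (by positivity)
    field_simp
  -- slope limit for t ↦ t^(1+ν)
  have hslope : Tendsto (fun t : ℝ => (t ^ (1 + ν) - 1) / (t - 1)) (𝓝[≠] (1 : ℝ))
      (𝓝 (1 + ν)) := by
    have h := Real.hasDerivAt_rpow_const (x := (1 : ℝ)) (p := 1 + ν) (Or.inl one_ne_zero)
    rw [hasDerivAt_iff_tendsto_slope] at h
    have heq : (1 + ν) * (1 : ℝ) ^ (1 + ν - 1) = 1 + ν := by
      rw [Real.one_rpow, mul_one]
    rw [heq] at h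
    refine h.congr (fun t => ?_)
    rw [slope_def_field, Real.one_rpow]
  -- main limit
  have main : Tendsto (fun y => D y * y / h₀ y) (𝓝[>] (0 : ℝ)) (𝓝 (1 + ν)) := by
    rw [Metric.tendsto_nhds]
    intro ε hε
    -- choose b > 1
    have hsb : Tendsto (fun t : ℝ => (t ^ (1 + ν) - 1) / (t - 1)) (𝓝[>] (1 : ℝ)) (𝓝 (1 + ν)) :=
      hslope.mono_left (nhdsWithin_mono 1 (fun x hx => ne_of_gt hx))
    obtain ⟨b, hbd, hb1⟩ := ((Metric.tendsto_nhds.1 hsb (ε / 2) (half_pos hε)).and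
      self_mem_nhdsWithin).exists
    -- choose a ∈ (0,1)
    have hsa : Tendsto (fun t : ℝ => (t ^ (1 + ν) - 1) / (t - 1)) (𝓝[<] (1 : ℝ)) (𝓝 (1 + ν)) :=
      hslope.mono_left (nhdsWithin_mono 1 (fun x hx => ne_of_lt hx))
    have hIoo : ∀ᶠ t in 𝓝[<] (1:ℝ), t ∈ Set.Ioo (0:ℝ) 1 :=
      Filter.eventually_of_mem (Ioo_mem_nhdsLT zero_lt_one) (fun x hx => hx)
    obtain ⟨a, had, haI⟩ := ((Metric.tendsto_nhds.1 hsa (ε / 2) (half_pos hε)).and hIoo).exists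
    have ha0 : 0 < a := haI.1
    have ha1 : a < 1 := haI.2
    have hb1' : (1 : ℝ) < b := hb1
    -- tendsto of the two bounding ratios
    have hub : Tendsto (fun y => (h₀ (b * y) / h₀ y - 1) / (b - 1)) (𝓝[>] (0 : ℝ))
        (𝓝 ((b ^ (1 + ν) - 1) / (b - 1))) :=
      ((hratio b (by linarith)).sub_const 1).div_const (b - 1)
    have hlb : Tendsto (fun y => (1 - h₀ (a * y) / h₀ y) / (1 - a)) (𝓝[>] (0 : ℝ))
        (𝓝 ((1 - a ^ (1 + ν)) / (1 - a))) :=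
      (tendsto_const_nhds.sub (hratio a ha0)).div_const (1 - a)
    have haφ : (1 - a ^ (1 + ν)) / (1 - a) = (a ^ (1 + ν) - 1) / (a - 1) := by
      rw [show (1 : ℝ) - a ^ (1 + ν) = -(a ^ (1 + ν) - 1) by ring,
        show (1 : ℝ) - a = -(a - 1) by ring, neg_div_neg_eq]
    have hmin : (0 : ℝ) < min 1 b⁻¹ := by positivity
    filter_upwards [Metric.tendsto_nhds.1 hub (ε / 2) (half_pos hε),
      Metric.tendsto_nhds.1 hlb (ε / 2) (half_pos hε),
      Ioo_mem_nhdsGT hmin] with y hy1 hy2 hy3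
    have hy0 : 0 < y := hy3.1
    have hyle : y ≤ 1 := le_of_lt (lt_of_lt_of_le hy3.2 (min_le_left _ _))
    have hby : b * y ≤ 1 := by
      have : y < b⁻¹ := lt_of_lt_of_le hy3.2 (min_le_right _ _)
      rw [← mul_inv_cancel₀ (by linarith : b ≠ 0)]
      exact mul_le_mul_of_nonneg_left (le_of_lt this) (by linarith)
    have hH : 0 < h₀ y := hpos y hy0 hyle
    -- upper bound
    have up : D y * y / h₀ y ≤ (h₀ (b * y) / h₀ y - 1) / (b - 1) := by
      have hb0 : (0 : ℝ) < b - 1 := by linarith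
      rw [div_le_div_iff₀ hH hb0]
      have e1 : (h₀ (b * y) / h₀ y - 1) * h₀ y = h₀ (b * y) - h₀ y := by
        field_simp
      rw [e1]
      have := (hmvt y (b * y) hy0 (by nlinarith) hby).1
      nlinarith
    -- lower bound
    have low : (1 - h₀ (a * y) / h₀ y) / (1 - a) ≤ D y * y / h₀ y := by
      have ha' : (0 : ℝ) < 1 - a := by linarith
      rw [div_le_div_iff₀ ha' hH]
      have e1 : (1 - h₀ (a * y) / h₀ y) * h₀ y = h₀ y - h₀ (a * y) := by
        field_simp
      rw [e1]
      have := (hmvt (a * y) y (by positivity) (by nlinarith) hyle).2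
      nlinarith
    rw [Real.dist_eq, abs_sub_lt_iff]
    rw [Real.dist_eq] at hy1 hy2 hbd had
    rw [haφ] at hy2
    have l1 := abs_lt.1 hy1
    have l2 := abs_lt.1 hy2
    have l3 := abs_lt.1 hbd
    have l4 := abs_lt.1 had
    constructor <;> linarith [l1.1, l1.2, l2.1, l2.2, l3.1, l3.2, l4.1, l4.2]
  -- transfer to J
  have hmap : Tendsto (fun s : ℝ => 1 - s) (𝓝[Set.Ico (0 : ℝ) 1] 1) (𝓝[>] (0 : ℝ)) := by
    rw [tendsto_nhdsWithin_iff]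
    constructor
    · have h1 : Tendsto (fun s : ℝ => 1 - s) (𝓝 1) (𝓝 (1 - 1)) :=
        (continuous_const.sub continuous_id).tendsto 1
      simpa using h1.mono_left nhdsWithin_le_nhds
    · filter_upwards [self_mem_nhdsWithin] with s hs
      exact sub_pos.2 hs.2
  have hcomp := (main.comp hmap).sub_const 1
  have hsub : (1 + ν) - 1 = ν := by ring
  rw [hsub] at hcomp
  apply hcomp.congr'
  filter_upwards [self_mem_nhdsWithin] with s hs
  simp only [Function.comp_apply]
  rw [hJ s]
  have hy0 : 0 < 1 - s := sub_pos.2 hs.2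
  have hy1 : 1 - s ≤ 1 := by linarith [hs.1]
  rw [hΛ (1 - s) ⟨hy0, hy1⟩]
  congr 1
  rw [hform (1 - s) hy0 hy1]
  have hrw : (1 - s) ^ (1 + ν) = (1 - s) * (1 - s) ^ ν := by
    rw [Real.rpow_add hy0, Real.rpow_one]
  rw [hrw]
  have hDv : D (1 - s) = 1 - deriv f s := by
    rw [hD]
    norm_num
  rw [hDv]
  have h1 : ((1 - s) : ℝ) ≠ 0 := ne_of_gt hy0
  have h2 : ((1 - s) : ℝ) ^ ν ≠ 0 := ne_of_gt (Real.rpow_pos_of_pos hy0 ν)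
  have h3 : L (1 / (1 - s)) ≠ 0 := ne_of_gt (hLpos _ (by positivity))
  field_simp
end

section
/- Let ν ∈ (0,1) and let L : (0,∞) → (0,∞) be continuous and slowly varying at infinity. Then the following are equivalent: (i) for every λ > 0, L(λx)/L(x) − 1 = O(L(x)/x^ν) as x → ∞; (ii) there exists a constant C_L ∈ (0,∞) such that L(x) = C_L + O(x^{−ν}) as x → ∞ (in particular L(x) → C_L as x → ∞). -/
open Filter Topology Asymptotics

private lemma geom_limit' {a : ℕ → ℝ} (C r : ℝ) (hr : r < 1)
    (hstep : ∀ n, dist (a n) (a (n + 1)) ≤ C * r ^ n) :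
    ∃ ℓ : ℝ, Tendsto a atTop (𝓝 ℓ) ∧ ∀ n, dist (a n) ℓ ≤ C * r ^ n / (1 - r) := by
  obtain ⟨ℓ, hℓ⟩ := cauchySeq_tendsto_of_complete (cauchySeq_of_le_geometric r C hr hstep)
  exact ⟨ℓ, hℓ, fun n => dist_le_of_le_geometric_of_tendsto r C hr hstep hℓ n⟩

theorem stmt_11
    (ν : ℝ) (hν : ν ∈ Set.Ioo (0 : ℝ) 1)
    (L : ℝ → ℝ) (hLpos : ∀ x : ℝ, 0 < x → 0 < L x)
    (hLcont : ContinuousOn L (Set.Ioi (0 : ℝ)))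
    (hSV : ∀ l : ℝ, 0 < l →
      Filter.Tendsto (fun x => L (l * x) / L x) Filter.atTop (𝓝 1)) :
    (∀ l : ℝ, 0 < l →
        (fun x => L (l * x) / L x - 1) =O[Filter.atTop] (fun x => L x / x ^ ν)) ↔
      (∃ Cₗ : ℝ, 0 < Cₗ ∧ Filter.Tendsto L Filter.atTop (𝓝 Cₗ) ∧
        (fun x => L x - Cₗ) =O[Filter.atTop] (fun x : ℝ => x ^ (-ν))) := by
  constructor
  · intro Hyp
    obtain ⟨hν0, hν1⟩ := hν
    set q : ℝ := (2 : ℝ) ^ (-ν) with hq_def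
    have hq0 : 0 < q := Real.rpow_pos_of_pos two_pos _
    have hq1 : q < 1 := Real.rpow_lt_one_of_one_lt_of_neg one_lt_two (by linarith)
    set s : ℝ := (1 + q) / 2 with hs_def
    have hs0 : 0 < s := by positivity
    have hs1 : s < 1 := by rw [hs_def]; linarith
    have hqs : q < s := by rw [hs_def]; linarith
    have h2ν : (0 : ℝ) < (2 : ℝ) ^ ν := Real.rpow_pos_of_pos two_pos _
    have hq_inv : q = ((2 : ℝ) ^ ν)⁻¹ := by
      rw [hq_def, Real.rpow_neg (by norm_num)]
    have hpow2 : ∀ n : ℕ, ((2 : ℝ) ^ n) ^ (-ν) = q ^ n := by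
      intro n
      rw [hq_def, ← Real.rpow_natCast (2 : ℝ) n, ← Real.rpow_natCast ((2:ℝ) ^ (-ν)) n,
        ← Real.rpow_mul (by norm_num), ← Real.rpow_mul (by norm_num), mul_comm]
    -- extract the constant from the hypothesis at l = 2
    obtain ⟨c, hc⟩ := isBigO_iff.1 (Hyp 2 two_pos)
    set K : ℝ := max c 1 with hK_def
    have hK1 : (1:ℝ) ≤ K := le_max_right _ _
    have hK0 : (0:ℝ) ≤ K := by linarith
    have hsq1 : (1:ℝ) < s / q := (one_lt_div hq0).2 hqs
    have E2 : ∀ᶠ x : ℝ in atTop, L (2 * x) / L x ≤ s / q :=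
      ((hSV 2 two_pos).eventually_le_const hsq1)
    obtain ⟨X', hX'⟩ := eventually_atTop.1 ((hc.and E2).and (eventually_ge_atTop 1))
    set X : ℝ := max X' 1 with hX_def
    have hX1 : (1:ℝ) ≤ X := le_max_right _ _
    have hX0 : (0:ℝ) < X := by linarith
    -- the two fundamental inequalities
    have hxpos : ∀ x : ℝ, X ≤ x → 0 < x := fun x hx => by linarith
    have hrpow_pos : ∀ x : ℝ, 0 < x → (0:ℝ) < x ^ ν := fun x hx => Real.rpow_pos_of_pos hx _
    have F1 : ∀ x : ℝ, X ≤ x → |L (2 * x) - L x| ≤ K * (L x * (L x / x ^ ν)) := by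
      intro x hx
      have hx0 : 0 < x := hxpos x hx
      have hL := hLpos x hx0
      have hxr := hrpow_pos x hx0
      have h1 := (hX' x (le_trans (le_max_left _ _) hx)).1.1
      rw [Real.norm_eq_abs, Real.norm_eq_abs] at h1
      have hhx : (0:ℝ) ≤ L x / x ^ ν := by positivity
      rw [abs_of_nonneg hhx] at h1
      have h2 : |L (2 * x) / L x - 1| ≤ K * (L x / x ^ ν) := by
        refine h1.trans ?_
        exact mul_le_mul_of_nonneg_right (le_max_left _ _) hhx
      have h3 : L (2 * x) - L x = (L (2 * x) / L x - 1) * L x := by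
        field_simp
      rw [h3, abs_mul, abs_of_pos hL]
      calc |L (2 * x) / L x - 1| * L x ≤ (K * (L x / x ^ ν)) * L x :=
            mul_le_mul_of_nonneg_right h2 hL.le
        _ = K * (L x * (L x / x ^ ν)) := by ring
    have F2 : ∀ x : ℝ, X ≤ x → L (2 * x) / (2 * x) ^ ν ≤ s * (L x / x ^ ν) := by
      intro x hx
      have hx0 : 0 < x := hxpos x hx
      have hL := hLpos x hx0
      have hxr := hrpow_pos x hx0
      have h1 := (hX' x (le_trans (le_max_left _ _) hx)).1.2
      have h2 : L (2 * x) ≤ s * (2:ℝ) ^ ν * L x := by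
        have : s / q = s * (2:ℝ) ^ ν := by field_simp [hq_inv]; rw [hq_inv, inv_mul_cancel₀ h2ν.ne']
        rw [this] at h1
        calc L (2 * x) = L (2 * x) / L x * L x := by field_simp
          _ ≤ s * (2:ℝ) ^ ν * L x := mul_le_mul_of_nonneg_right h1 hL.le
      rw [Real.mul_rpow (by norm_num) hx0.le]
      rw [div_le_iff₀ (by positivity)]
      calc L (2 * x) ≤ s * (2:ℝ) ^ ν * L x := h2
        _ = s * (L x / x ^ ν) * ((2:ℝ) ^ ν * x ^ ν) := by field_simp
    -- iterated decay of h along doubling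
    have hgrow : ∀ (y : ℝ), X ≤ y → ∀ n : ℕ, X ≤ 2 ^ n * y := by
      intro y hy n
      have hy0 : 0 < y := hxpos y hy
      have : (1:ℝ) ≤ 2 ^ n := one_le_pow₀ (by norm_num)
      nlinarith
    have harg : ∀ (y : ℝ) (n : ℕ), (2:ℝ) ^ (n+1) * y = 2 * (2 ^ n * y) := by
      intro y n; ring
    have hdec_iter : ∀ (y : ℝ), X ≤ y → ∀ n : ℕ,
        L (2 ^ n * y) / (2 ^ n * y) ^ ν ≤ s ^ n * (L y / y ^ ν) := by
      intro y hy n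
      induction n with
      | zero => simp
      | succ n ih =>
        rw [harg y n]
        calc L (2 * (2 ^ n * y)) / (2 * (2 ^ n * y)) ^ ν
            ≤ s * (L (2 ^ n * y) / (2 ^ n * y) ^ ν) := F2 _ (hgrow y hy n)
          _ ≤ s * (s ^ n * (L y / y ^ ν)) := mul_le_mul_of_nonneg_left ih hs0.le
          _ = s ^ (n+1) * (L y / y ^ ν) := by ring
    have hsum_le : ∀ n : ℕ, ∑ k ∈ Finset.range n, s ^ k ≤ (1 - s)⁻¹ := by
      intro n
      have h1 : (0:ℝ) < 1 - s := by linarith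
      rw [geom_sum_eq hs1.ne n,
        show (s ^ n - 1) / (s - 1) = (1 - s ^ n) / (1 - s) by rw [← neg_div_neg_eq]; ring_nf,
        inv_eq_one_div]
      have hp : (0:ℝ) ≤ s ^ n := pow_nonneg hs0.le n
      gcongr
      linarith
    -- boundedness of L along the doubling sequence
    have hbound : ∀ (y : ℝ), X ≤ y → ∀ n : ℕ,
        L (2 ^ n * y) ≤ L y * Real.exp (K * (L y / y ^ ν) * (1 - s)⁻¹) := by
      intro y hy
      have hy0 : 0 < y := hxpos y hy
      have hhy : (0:ℝ) ≤ L y / y ^ ν := by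
        have := hLpos y hy0; have := hrpow_pos y hy0; positivity
      have main : ∀ n : ℕ, L (2 ^ n * y) ≤
          L y * Real.exp (K * (L y / y ^ ν) * ∑ k ∈ Finset.range n, s ^ k) := by
        intro n
        induction n with
        | zero => simp
        | succ n ih =>
          have hz : X ≤ 2 ^ n * y := hgrow y hy n
          have hz0 : 0 < 2 ^ n * y := hxpos _ hz
          have hLz := hLpos _ hz0
          have hhz : (0:ℝ) ≤ L (2 ^ n * y) / (2 ^ n * y) ^ ν := by
            have := hrpow_pos _ hz0; positivity
          have step : L (2 ^ (n+1) * y) ≤ L (2 ^ n * y) * (1 + K * (L (2 ^ n * y) / (2 ^ n * y) ^ ν)) := by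
            rw [harg y n]
            have := (abs_le.1 (F1 _ hz)).2
            nlinarith
          have step2 : L (2 ^ n * y) * (1 + K * (L (2 ^ n * y) / (2 ^ n * y) ^ ν))
              ≤ L (2 ^ n * y) * Real.exp (K * (L y / y ^ ν) * s ^ n) := by
            apply mul_le_mul_of_nonneg_left ?_ hLz.le
            have h1 : K * (L (2 ^ n * y) / (2 ^ n * y) ^ ν) ≤ K * (L y / y ^ ν) * s ^ n := by
              have := hdec_iter y hy n
              calc K * (L (2 ^ n * y) / (2 ^ n * y) ^ ν) ≤ K * (s ^ n * (L y / y ^ ν)) :=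
                  mul_le_mul_of_nonneg_left this hK0
                _ = K * (L y / y ^ ν) * s ^ n := by ring
            calc 1 + K * (L (2 ^ n * y) / (2 ^ n * y) ^ ν)
                ≤ 1 + K * (L y / y ^ ν) * s ^ n := by linarith
              _ ≤ Real.exp (K * (L y / y ^ ν) * s ^ n) := by
                  have := Real.add_one_le_exp (K * (L y / y ^ ν) * s ^ n); linarith
          calc L (2 ^ (n+1) * y) ≤ L (2 ^ n * y) * Real.exp (K * (L y / y ^ ν) * s ^ n) :=
              step.trans step2
            _ ≤ (L y * Real.exp (K * (L y / y ^ ν) * ∑ k ∈ Finset.range n, s ^ k)) *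
                Real.exp (K * (L y / y ^ ν) * s ^ n) :=
              mul_le_mul_of_nonneg_right ih (Real.exp_pos _).le
            _ = L y * Real.exp (K * (L y / y ^ ν) * ∑ k ∈ Finset.range (n+1), s ^ k) := by
              rw [mul_assoc, ← Real.exp_add, Finset.sum_range_succ, mul_add]
      intro n
      refine (main n).trans (mul_le_mul_of_nonneg_left ?_ (hLpos y hy0).le)
      apply Real.exp_le_exp.2
      have : (0:ℝ) ≤ K * (L y / y ^ ν) := by positivity
      exact mul_le_mul_of_nonneg_left (hsum_le n) this
    -- key geometric convergence along the doubling sequence from any base point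
    set T : ℝ → ℝ := fun y =>
      K * (L y * Real.exp (K * (L y / y ^ ν) * (1 - s)⁻¹)) * (L y / y ^ ν) / (1 - s) with hT_def
    have key : ∀ (y : ℝ), X ≤ y → ∃ ℓ : ℝ,
        Tendsto (fun n : ℕ => L (2 ^ n * y)) atTop (𝓝 ℓ) ∧
        ∀ n : ℕ, dist (L (2 ^ n * y)) ℓ ≤ T y * s ^ n := by
      intro y hy
      have hy0 : 0 < y := hxpos y hy
      set M : ℝ := L y * Real.exp (K * (L y / y ^ ν) * (1 - s)⁻¹) with hM_def
      have hM0 : 0 ≤ M := by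
        have := hLpos y hy0; positivity
      have hhy : (0:ℝ) ≤ L y / y ^ ν := by
        have := hLpos y hy0; have := hrpow_pos y hy0; positivity
      have hstep : ∀ n : ℕ, dist (L (2 ^ n * y)) (L (2 ^ (n+1) * y)) ≤
          (K * M * (L y / y ^ ν)) * s ^ n := by
        intro n
        have hz : X ≤ 2 ^ n * y := hgrow y hy n
        have hz0 : 0 < 2 ^ n * y := hxpos _ hz
        rw [Real.dist_eq, abs_sub_comm, harg y n]
        calc |L (2 * (2 ^ n * y)) - L (2 ^ n * y)|
            ≤ K * (L (2 ^ n * y) * (L (2 ^ n * y) / (2 ^ n * y) ^ ν)) := F1 _ hz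
          _ ≤ K * (M * (s ^ n * (L y / y ^ ν))) := by
              apply mul_le_mul_of_nonneg_left ?_ hK0
              apply mul_le_mul (hbound y hy n) (hdec_iter y hy n) ?_ hM0
              have := hLpos _ hz0; have := hrpow_pos _ hz0; positivity
          _ = (K * M * (L y / y ^ ν)) * s ^ n := by ring
      obtain ⟨ℓ, hℓt, hℓb⟩ := geom_limit' (K * M * (L y / y ^ ν)) s hs1 hstep
      refine ⟨ℓ, hℓt, fun n => (hℓb n).trans (le_of_eq ?_)⟩
      rw [hT_def, hM_def]
      ring
    -- the common limit
    obtain ⟨CL, hCLt, hCLb⟩ := key X le_rfl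
    have h2n_atTop : ∀ (y : ℝ), 0 < y → Tendsto (fun n : ℕ => (2:ℝ) ^ n * y) atTop atTop :=
      fun y hy => (tendsto_pow_atTop_atTop_of_one_lt one_lt_two).atTop_mul_const hy
    have keyC : ∀ (y : ℝ), X ≤ y →
        Tendsto (fun n : ℕ => L (2 ^ n * y)) atTop (𝓝 CL) ∧
        ∀ n : ℕ, dist (L (2 ^ n * y)) CL ≤ T y * s ^ n := by
      intro y hy
      obtain ⟨ℓ, hℓt, hℓb⟩ := key y hy
      have hy0 : 0 < y := hxpos y hy
      have hratio : Tendsto (fun n : ℕ =>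
          L ((y / X) * ((2:ℝ) ^ n * X)) / L ((2:ℝ) ^ n * X)) atTop (𝓝 1) :=
        (hSV (y / X) (div_pos hy0 hX0)).comp (h2n_atTop X hX0)
      have hprod := hratio.mul hCLt
      rw [one_mul] at hprod
      have heq : (fun n : ℕ =>
          L ((y / X) * ((2:ℝ) ^ n * X)) / L ((2:ℝ) ^ n * X) * L ((2:ℝ) ^ n * X)) =
          fun n : ℕ => L ((2:ℝ) ^ n * y) := by
        funext n
        have hz0 : 0 < (2:ℝ) ^ n * X := hxpos _ (hgrow X le_rfl n)
        rw [div_mul_cancel₀ _ (hLpos _ hz0).ne']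
        congr 1
        field_simp
      rw [heq] at hprod
      have : ℓ = CL := tendsto_nhds_unique hℓt hprod
      rw [this] at hℓt hℓb
      exact ⟨hℓt, hℓb⟩
    -- positivity of the limit
    have hCL0 : 0 < CL := by
      set A : ℝ := K * Real.exp (K * (L X / X ^ ν) * (1 - s)⁻¹) * (L X / X ^ ν) / (1 - s) with hA_def
      have hs' : (0:ℝ) < 1 - s := by linarith
      have hLX := hLpos X hX0
      have hhX : (0:ℝ) ≤ L X / X ^ ν := by have := hrpow_pos X hX0; positivity
      have hA0 : 0 ≤ A := by positivity
      have htend0 : Tendsto (fun m : ℕ => A * s ^ m) atTop (𝓝 0) := by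
        have := (tendsto_pow_atTop_nhds_zero_of_lt_one hs0.le hs1).const_mul A
        simpa using this
      obtain ⟨m, hm⟩ := (htend0.eventually_lt_const one_pos).exists
      set ym : ℝ := 2 ^ m * X with hym_def
      have hymX : X ≤ ym := hgrow X le_rfl m
      have hym0 : 0 < ym := hxpos _ hymX
      have hLym := hLpos _ hym0
      -- T ym ≤ A * s ^ m * L ym
      have hTm : T ym ≤ A * s ^ m * L ym := by
        have hdm : L ym / ym ^ ν ≤ s ^ m * (L X / X ^ ν) := hdec_iter X le_rfl m
        have hdm' : L ym / ym ^ ν ≤ L X / X ^ ν := by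
          have hsm1 : s ^ m ≤ 1 := pow_le_one₀ hs0.le hs1.le
          nlinarith
        have hhym : (0:ℝ) ≤ L ym / ym ^ ν := by have := hrpow_pos _ hym0; positivity
        have hexp : Real.exp (K * (L ym / ym ^ ν) * (1 - s)⁻¹) ≤
            Real.exp (K * (L X / X ^ ν) * (1 - s)⁻¹) := by
          apply Real.exp_le_exp.2
          apply mul_le_mul_of_nonneg_right (mul_le_mul_of_nonneg_left hdm' hK0) (by positivity)
        have m1 : L ym * Real.exp (K * (L ym / ym ^ ν) * (1 - s)⁻¹) ≤
            L ym * Real.exp (K * (L X / X ^ ν) * (1 - s)⁻¹) :=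
          mul_le_mul_of_nonneg_left hexp hLym.le
        have m2 : K * (L ym * Real.exp (K * (L ym / ym ^ ν) * (1 - s)⁻¹)) ≤
            K * (L ym * Real.exp (K * (L X / X ^ ν) * (1 - s)⁻¹)) :=
          mul_le_mul_of_nonneg_left m1 hK0
        have m3 : K * (L ym * Real.exp (K * (L ym / ym ^ ν) * (1 - s)⁻¹)) * (L ym / ym ^ ν) ≤
            K * (L ym * Real.exp (K * (L X / X ^ ν) * (1 - s)⁻¹)) * (s ^ m * (L X / X ^ ν)) := by
          apply mul_le_mul m2 hdm hhym
          have := Real.exp_pos (K * (L X / X ^ ν) * (1 - s)⁻¹)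
          positivity
        calc T ym = K * (L ym * Real.exp (K * (L ym / ym ^ ν) * (1 - s)⁻¹)) *
              (L ym / ym ^ ν) * (1 - s)⁻¹ := by simp only [hT_def]; rw [div_eq_mul_inv]
          _ ≤ K * (L ym * Real.exp (K * (L X / X ^ ν) * (1 - s)⁻¹)) *
              (s ^ m * (L X / X ^ ν)) * (1 - s)⁻¹ :=
            mul_le_mul_of_nonneg_right m3 (by positivity)
          _ = A * s ^ m * L ym := by rw [hA_def]; ring
      have hb0 := (keyC ym hymX).2 0
      rw [pow_zero, one_mul, pow_zero, mul_one] at hb0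
      have : dist (L ym) CL < L ym := by
        calc dist (L ym) CL ≤ T ym := hb0
          _ ≤ A * s ^ m * L ym := hTm
          _ < 1 * L ym := by
              apply mul_lt_mul_of_pos_right hm hLym
          _ = L ym := one_mul _
      rw [Real.dist_eq, abs_sub_lt_iff] at this
      linarith [this.1]
    -- uniform bound for T on the compact interval [X, 2X]
    have hs' : (0:ℝ) < 1 - s := by linarith
    have hIcc_sub : Set.Icc X (2 * X) ⊆ Set.Ioi (0:ℝ) := fun y hy => lt_of_lt_of_le hX0 hy.1
    have hIcc_ne : (Set.Icc X (2 * X)).Nonempty := ⟨X, Set.left_mem_Icc.2 (by linarith)⟩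
    obtain ⟨z₀, hz₀mem, hz₀max⟩ := isCompact_Icc.exists_isMaxOn hIcc_ne (hLcont.mono hIcc_sub)
    set Mc : ℝ := L z₀ with hMc_def
    have hMc0 : 0 < Mc := hLpos _ (hIcc_sub hz₀mem)
    have hLle : ∀ y ∈ Set.Icc X (2 * X), L y ≤ Mc := fun y hy => hz₀max hy
    have hhle : ∀ y ∈ Set.Icc X (2 * X), L y / y ^ ν ≤ Mc := by
      intro y hy
      have hy1 : (1:ℝ) ≤ y := le_trans hX1 hy.1
      have hyr : (1:ℝ) ≤ y ^ ν := Real.one_le_rpow hy1 hν0.le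
      have hLy := hLpos y (hIcc_sub hy)
      calc L y / y ^ ν ≤ L y / 1 := by
            apply div_le_div_of_nonneg_left hLy.le one_pos hyr
        _ = L y := div_one _
        _ ≤ Mc := hLle y hy
    set B : ℝ := K * (Mc * Real.exp (K * Mc * (1 - s)⁻¹)) * Mc / (1 - s) with hB_def
    have hB0 : 0 ≤ B := by positivity
    have hTB : ∀ y ∈ Set.Icc X (2 * X), T y ≤ B := by
      intro y hy
      have hLy := hLpos y (hIcc_sub hy)
      have hhy : (0:ℝ) ≤ L y / y ^ ν := by
        have := hrpow_pos y (hIcc_sub hy); positivity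
      have hexp : Real.exp (K * (L y / y ^ ν) * (1 - s)⁻¹) ≤ Real.exp (K * Mc * (1 - s)⁻¹) :=
        Real.exp_le_exp.2 (mul_le_mul_of_nonneg_right
          (mul_le_mul_of_nonneg_left (hhle y hy) hK0) (by positivity))
      have m1 : L y * Real.exp (K * (L y / y ^ ν) * (1 - s)⁻¹) ≤
          Mc * Real.exp (K * Mc * (1 - s)⁻¹) :=
        mul_le_mul (hLle y hy) hexp (Real.exp_pos _).le hMc0.le
      have m3 : K * (L y * Real.exp (K * (L y / y ^ ν) * (1 - s)⁻¹)) * (L y / y ^ ν) ≤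
          K * (Mc * Real.exp (K * Mc * (1 - s)⁻¹)) * Mc := by
        apply mul_le_mul (mul_le_mul_of_nonneg_left m1 hK0) (hhle y hy) hhy
        have := Real.exp_pos (K * Mc * (1 - s)⁻¹)
        positivity
      calc T y = K * (L y * Real.exp (K * (L y / y ^ ν) * (1 - s)⁻¹)) * (L y / y ^ ν) * (1 - s)⁻¹ := by
            simp only [hT_def]; rw [div_eq_mul_inv]
        _ ≤ K * (Mc * Real.exp (K * Mc * (1 - s)⁻¹)) * Mc * (1 - s)⁻¹ :=
            mul_le_mul_of_nonneg_right m3 (by positivity)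
        _ = B := by rw [hB_def, div_eq_mul_inv]
    -- plain convergence of L to CL
    have conv : Tendsto L atTop (𝓝 CL) := by
      rw [Metric.tendsto_atTop]
      intro ε hε
      have htend0 : Tendsto (fun n : ℕ => B * s ^ n) atTop (𝓝 0) := by
        have := (tendsto_pow_atTop_nhds_zero_of_lt_one hs0.le hs1).const_mul B
        simpa using this
      obtain ⟨N, hN⟩ := (htend0.eventually_lt_const hε).exists
      refine ⟨2 ^ N * X, fun z hz => ?_⟩
      have hpN : (1:ℝ) ≤ 2 ^ N := one_le_pow₀ (by norm_num)
      have hzX : X ≤ z := le_trans (le_mul_of_one_le_left hX0.le hpN) hz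
      have hz0 : 0 < z := hxpos z hzX
      have h1z : 1 ≤ z / X := (one_le_div hX0).2 hzX
      obtain ⟨n, hn1, hn2⟩ := exists_nat_pow_near h1z one_lt_two
      have hpn : (0:ℝ) < 2 ^ n := by positivity
      set y : ℝ := z / 2 ^ n with hy_def
      have hn1' : (2:ℝ) ^ n * X ≤ z := by
        rw [le_div_iff₀ hX0] at hn1; linarith
      have hn2' : z < 2 ^ (n+1) * X := by
        rw [div_lt_iff₀ hX0] at hn2; linarith
      have hyX : X ≤ y := by
        rw [hy_def, le_div_iff₀ hpn]; linarith
      have hy2X : y ≤ 2 * X := by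
        rw [hy_def, div_le_iff₀ hpn]
        have he : (2:ℝ) ^ (n+1) = 2 * 2 ^ n := by ring
        rw [he] at hn2'
        linarith
      have hzy : z = 2 ^ n * y := by
        rw [hy_def, mul_div_cancel₀ _ hpn.ne']
      have hNn : N ≤ n := by
        by_contra hcon
        push_neg at hcon
        have h1 : (2:ℝ) ^ (n+1) ≤ 2 ^ N := pow_le_pow_right₀ (by norm_num) hcon
        have h2 := mul_le_mul_of_nonneg_right h1 hX0.le
        linarith
      calc dist (L z) CL = dist (L (2 ^ n * y)) CL := by rw [← hzy]
        _ ≤ T y * s ^ n := (keyC y hyX).2 n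
        _ ≤ B * s ^ n := mul_le_mul_of_nonneg_right (hTB y ⟨hyX, hy2X⟩) (pow_nonneg hs0.le n)
        _ ≤ B * s ^ N := mul_le_mul_of_nonneg_left
            (pow_le_pow_of_le_one hs0.le hs1.le hNn) hB0
        _ < ε := hN
    -- rate of convergence
    refine ⟨CL, hCL0, conv, ?_⟩
    obtain ⟨Y', hY'⟩ := eventually_atTop.1 (conv.eventually_le_const (by linarith : CL < 2 * CL))
    set Y : ℝ := max Y' X with hY_def
    have hYX : X ≤ Y := le_max_right _ _
    have rate : ∀ y : ℝ, Y ≤ y → |L y - CL| ≤ (4 * K * CL ^ 2 / (1 - q)) * y ^ (-ν) := by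
      intro y hy
      have hyX : X ≤ y := le_trans hYX hy
      have hy0 : 0 < y := hxpos y hyX
      have hyr : 0 < y ^ (-ν) := Real.rpow_pos_of_pos hy0 _
      have hub : ∀ n : ℕ, L (2 ^ n * y) ≤ 2 * CL := by
        intro n
        apply hY' _ (le_trans (le_max_left _ _) ((le_trans hy (le_mul_of_one_le_left hy0.le
          (one_le_pow₀ (by norm_num))))))
      have hstep : ∀ n : ℕ, dist (L (2 ^ n * y)) (L (2 ^ (n+1) * y)) ≤
          (4 * K * CL ^ 2 * y ^ (-ν)) * q ^ n := by
        intro n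
        have hz : X ≤ 2 ^ n * y := hgrow y hyX n
        have hz0 : 0 < 2 ^ n * y := hxpos _ hz
        have hLz := hLpos _ hz0
        have hzinv : L (2 ^ n * y) / (2 ^ n * y) ^ ν = L (2 ^ n * y) * (q ^ n * y ^ (-ν)) := by
          rw [div_eq_mul_inv, ← Real.rpow_neg hz0.le,
            Real.mul_rpow (by positivity : (0:ℝ) ≤ (2:ℝ) ^ n) hy0.le, hpow2 n]
        rw [Real.dist_eq, abs_sub_comm, harg y n]
        calc |L (2 * (2 ^ n * y)) - L (2 ^ n * y)|
            ≤ K * (L (2 ^ n * y) * (L (2 ^ n * y) / (2 ^ n * y) ^ ν)) := F1 _ hz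
          _ = K * (L (2 ^ n * y) * L (2 ^ n * y)) * (q ^ n * y ^ (-ν)) := by
              rw [hzinv]; ring
          _ ≤ K * (2 * CL * (2 * CL)) * (q ^ n * y ^ (-ν)) := by
              have hq' : (0:ℝ) ≤ q ^ n * y ^ (-ν) := by positivity
              apply mul_le_mul_of_nonneg_right ?_ hq'
              apply mul_le_mul_of_nonneg_left ?_ hK0
              exact mul_le_mul (hub n) (hub n) hLz.le (by linarith)
          _ = (4 * K * CL ^ 2 * y ^ (-ν)) * q ^ n := by ring
      have hat : Tendsto (fun n : ℕ => L (2 ^ n * y)) atTop (𝓝 CL) :=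
        conv.comp (h2n_atTop y hy0)
      have := dist_le_of_le_geometric_of_tendsto₀ q (4 * K * CL ^ 2 * y ^ (-ν)) hq1 hstep hat
      rw [show ((2:ℝ) ^ (0:ℕ) * y) = y by norm_num] at this
      rw [Real.dist_eq] at this
      calc |L y - CL| ≤ 4 * K * CL ^ 2 * y ^ (-ν) / (1 - q) := this
        _ = (4 * K * CL ^ 2 / (1 - q)) * y ^ (-ν) := by ring
    rw [isBigO_iff]
    refine ⟨4 * K * CL ^ 2 / (1 - q), ?_⟩
    filter_upwards [eventually_ge_atTop Y, eventually_gt_atTop 0] with y h1 h2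
    rw [Real.norm_eq_abs, Real.norm_eq_abs, abs_of_pos (Real.rpow_pos_of_pos h2 _)]
    exact rate y h1
  · intro h l hl
    obtain ⟨C, hC, htend, hO⟩ := h
    have hx0 : ∀ᶠ x : ℝ in atTop, 0 < x := eventually_gt_atTop 0
    have hmul : Tendsto (fun x : ℝ => l * x) atTop atTop :=
      Tendsto.const_mul_atTop hl tendsto_id
    have h1 : (fun x : ℝ => L (l * x) - C) =O[atTop] fun x : ℝ => (l * x) ^ (-ν) :=
      hO.comp_tendsto hmul
    have h1' : (fun x : ℝ => L (l * x) - C) =O[atTop] fun x : ℝ => x ^ (-ν) := by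
      refine h1.trans ?_
      have heq : (fun x : ℝ => (l * x) ^ (-ν)) =ᶠ[atTop]
          fun x : ℝ => l ^ (-ν) * x ^ (-ν) := by
        filter_upwards [hx0] with x hx
        rw [Real.mul_rpow hl.le hx.le]
      exact heq.trans_isBigO (isBigO_const_mul_self _ _ _)
    have h3 : (fun x : ℝ => L (l * x) - L x) =O[atTop] fun x : ℝ => x ^ (-ν) := by
      have := h1'.sub hO
      refine this.congr_left fun x => by ring
    have hinv : Tendsto (fun x => (L x)⁻¹) atTop (𝓝 C⁻¹) := htend.inv₀ (ne_of_gt hC)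
    have hinvO : (fun x => (L x)⁻¹) =O[atTop] (fun _ : ℝ => (1 : ℝ)) := hinv.isBigO_one ℝ
    have h5 : (fun x => L (l * x) / L x - 1) =O[atTop] fun x : ℝ => x ^ (-ν) := by
      have heq : (fun x => L (l * x) / L x - 1) =ᶠ[atTop]
          fun x => (L (l * x) - L x) * (L x)⁻¹ := by
        filter_upwards [hx0] with x hx
        have hLx := hLpos x hx
        field_simp
      refine heq.trans_isBigO ?_
      have := h3.mul hinvO
      simpa using this
    refine h5.trans ?_
    have heq : (fun x : ℝ => x ^ (-ν)) =ᶠ[atTop] fun x => (L x)⁻¹ * (L x / x ^ ν) := by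
      filter_upwards [hx0] with x hx
      have hLx := (hLpos x hx).ne'
      rw [Real.rpow_neg hx.le]
      field_simp
    refine heq.trans_isBigO ?_
    have := hinvO.mul (isBigO_refl (fun x => L x / x ^ ν) atTop)
    simpa using this
end
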